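/- arXiv:2009.09033 — 7 statements merged into one kernel-verified Lean document; each statement's English description precedes it below -/
import Mathlib

section
/- Let I be an upward directed set, let {C_i}_{i∈I} be a family of extended Choquet cones, and for all i, j ∈ I with j ≤ i let φ_{i,j} : C_i → C_j be continuous linear maps (additive, homogeneous with respect to scalar multiplication, sending 0 to 0) such that φ_{i,i} = id and φ_{j,k} ∘ φ_{i,j} = φ_{i,k} whenever k ≤ j ≤ i. Let C = {(x_i)_i ∈ ∏_{i∈I} C_i : φ_{i,j}(x_i) = x_j for all j ≤ i}, equipped with coordinatewise addition and scalar multiplication and with the topology induced from the product topology. Then C is an extended Choquet cone. -/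
open scoped ENNReal NNReal

/-- The positive real numbers, used as scalars for cones. -/
abbrev PosReal : Type := {t : ℝ // 0 < t}

/-- An extended Choquet cone: an algebraically ordered topological cone that is a lattice
under the algebraic order, with addition distributing over `⊓` and `⊔`, whose topology is
compact, Hausdorff and locally convex. -/
class ECCone (C : Type*) extends AddCommMonoid C, Lattice C, TopologicalSpace C where
  psmul : PosReal → C → C
  psmul_add : ∀ (t : PosReal) (x y : C), psmul t (x + y) = psmul t x + psmul t y
  add_psmul : ∀ (s t : PosReal) (x : C), psmul (s + t) x = psmul s x + psmul t x
  psmul_mul : ∀ (s t : PosReal) (x : C), psmul s (psmul t x) = psmul (s * t) x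
  one_psmul : ∀ x : C, psmul 1 x = x
  psmul_zero : ∀ t : PosReal, psmul t 0 = 0
  le_iff_exists_add : ∀ x y : C, x ≤ y ↔ ∃ z, x + z = y
  add_inf_distrib : ∀ x y z : C, x + (y ⊓ z) = (x + y) ⊓ (x + z)
  add_sup_distrib : ∀ x y z : C, x + (y ⊔ z) = (x + y) ⊔ (x + z)
  continuous_add' : Continuous fun p : C × C => p.1 + p.2
  continuous_psmul : Continuous fun p : PosReal × C => psmul p.1 p.2
  compact : CompactSpace C
  t2 : T2Space C
  locally_convex : ∀ (x : C) (U : Set C), IsOpen U → x ∈ U →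
    ∃ V : Set C, IsOpen V ∧ x ∈ V ∧ V ⊆ U ∧
      ∀ y ∈ V, ∀ z ∈ V, ∀ s t : PosReal, s.1 + t.1 = 1 → psmul s y + psmul t z ∈ V

/-- The way-below relation for functions into `[0,∞]`, relative to a set `S` of functions:
`f ≪ g` iff for every increasing sequence in `S` whose pointwise supremum dominates `g`,
some term of the sequence dominates `f`. -/
def FWayBelow {α : Type*} (S : Set (α → ℝ≥0∞)) (f g : α → ℝ≥0∞) : Prop :=
  ∀ h : ℕ → α → ℝ≥0∞, (∀ n, h n ∈ S) → Monotone h → (∀ a, g a ≤ ⨆ n, h n a) → ∃ n, f ≤ h n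

namespace ECCone

variable {C : Type*} [ECCone C]

/-- `w` is an idempotent: `2w = w`. -/
def IsIdem (w : C) : Prop := w + w = w

/-- `e` is the support idempotent of `x`: the maximum of `{z : x + z = x}`. -/
def IsSuppIdem (x e : C) : Prop := x + e = x ∧ ∀ z : C, x + z = x → z ≤ e

/-- `w₁ ≫ w₂` in the lattice of idempotents with the opposite order: whenever a nonempty
downward directed family of idempotents has an infimum `≤ w₂`, some member is `≤ w₁`. -/
def IdemWayBelow (w₁ w₂ : C) : Prop :=
  ∀ D : Set C, D.Nonempty → (∀ v ∈ D, IsIdem v) → DirectedOn (· ≥ ·) D →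
    ∀ m : C, IsGLB D m → m ≤ w₂ → ∃ v ∈ D, v ≤ w₁

/-- A compact idempotent: `w ≫ w`. -/
def IsCompactIdem (w : C) : Prop := IsIdem w ∧ IdemWayBelow w w

/-- `v` is compact relative to `w`: whenever a nonempty downward directed family of
idempotents has an infimum `≤ v`, some member `u` satisfies `u ⊓ w ≤ v`. -/
def CompactRelTo (v w : C) : Prop :=
  ∀ D : Set C, D.Nonempty → (∀ u ∈ D, IsIdem u) → DirectedOn (· ≥ ·) D →
    ∀ m : C, IsGLB D m → m ≤ v → ∃ u ∈ D, u ⊓ w ≤ v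

/-- `C` has an abundance of compact idempotents: every idempotent is an infimum
of compact idempotents. -/
def HasAbundantCompactIdem (C : Type*) [ECCone C] : Prop :=
  ∀ w : C, IsIdem w → ∃ D : Set C, (∀ v ∈ D, IsCompactIdem v) ∧ IsGLB D w

/-- `C` is strongly connected: `{x : x ≤ w}` is connected for every idempotent `w`. -/
def StronglyConnected (C : Type*) [ECCone C] : Prop :=
  ∀ w : C, IsIdem w → IsConnected {x : C | x ≤ w}

/-- A linear function on a cone: additive, homogeneous, sending `0` to `0`. -/
def IsLinFun (f : C → ℝ≥0∞) : Prop :=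
  f 0 = 0 ∧ (∀ x y : C, f (x + y) = f x + f y) ∧
    ∀ (t : PosReal) (x : C), f (psmul t x) = ENNReal.ofReal t.1 * f x

/-- Membership in `Lsc(C)`: linear and lower semicontinuous. -/
def MemLsc (f : C → ℝ≥0∞) : Prop := IsLinFun f ∧ LowerSemicontinuous f

/-- Membership in `Lsc_σ(C)`: in `Lsc(C)` and `f⁻¹((a,∞])` is σ-compact for all `a < ∞`. -/
def MemLscSigma (f : C → ℝ≥0∞) : Prop :=
  MemLsc f ∧ ∀ a : ℝ≥0, IsSigmaCompact {x : C | (a : ℝ≥0∞) < f x}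

/-- Membership in `A(C)`: linear and continuous. -/
def MemA (f : C → ℝ≥0∞) : Prop := IsLinFun f ∧ Continuous f

/-- `w = supp f`, the supremum of `{x : f x = 0}`. -/
def IsSupp (f : C → ℝ≥0∞) (w : C) : Prop := IsLUB {x : C | f x = 0} w

/-- The relation `f ◁ g`: `f ≤ (1-ε)g` for some `ε > 0`, and `f` is continuous at every
point where `g` is finite. -/
def Lhd (f g : C → ℝ≥0∞) : Prop :=
  (∃ ε : ℝ, 0 < ε ∧ ∀ x, f x ≤ ENNReal.ofReal (1 - ε) * g x) ∧
    ∀ x : C, g x ≠ ⊤ → ContinuousAt f x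

end ECCone

/-- The zero element of a cone, for an explicitly given `ECCone` structure. -/
def ECCone.zeroOf {C : Type*} (inst : ECCone C) : C := letI := inst; 0

/-- The addition of a cone, for an explicitly given `ECCone` structure. -/
def ECCone.addOf {C : Type*} (inst : ECCone C) (x y : C) : C := letI := inst; x + y

section AuxNets

open Filter Topology

variable {X : Type*} [TopologicalSpace X] [CompactSpace X] [T2Space X] [PartialOrder X]
variable {J : Type*} [Preorder J] [Nonempty J] [IsDirected J (· ≤ ·)]

theorem aux_exists_tendsto_isGLB (hcl : IsClosed {p : X × X | p.1 ≤ p.2})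
    (f : J → X) (hf : Antitone f) :
    ∃ m : X, Filter.Tendsto f Filter.atTop (𝓝 m) ∧ IsGLB (Set.range f) m := by
  haveI : (Filter.atTop : Filter J).NeBot := Filter.atTop_neBot_iff.2 ⟨‹_›, ‹_›⟩
  have key : ∀ m : X, MapClusterPt m (Filter.atTop : Filter J) f → IsGLB (Set.range f) m := by
    intro m hm
    have hmem : ∀ s : Set X, s ∈ Filter.map f Filter.atTop → IsClosed s → m ∈ s := by
      intro s hs hsc
      have h1 : ClusterPt m (𝓟 s) := hm.clusterPt.mono (Filter.le_principal_iff.2 hs)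
      exact hsc.closure_subset (mem_closure_iff_clusterPt.2 h1)
    constructor
    · rintro _ ⟨j, rfl⟩
      refine hmem {x : X | x ≤ f j} ?_ ?_
      · exact Filter.mem_map.2 ((Filter.eventually_ge_atTop j).mono fun i hi => hf hi)
      · exact hcl.preimage (by continuity : Continuous fun x : X => (x, f j))
    · intro c hc
      refine hmem {x : X | c ≤ x} ?_ ?_
      · exact Filter.mem_map.2 (Filter.Eventually.of_forall fun i => hc ⟨i, rfl⟩)
      · exact hcl.preimage (by continuity : Continuous fun x : X => (c, x))
  obtain ⟨m, hm⟩ := exists_clusterPt_of_compactSpace (Filter.map f Filter.atTop)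
  have hglb := key m hm
  exact ⟨m, tendsto_nhds_of_unique_mapClusterPt fun x hx => (key x hx).unique hglb, hglb⟩

theorem aux_exists_tendsto_isLUB (hcl : IsClosed {p : X × X | p.1 ≤ p.2})
    (f : J → X) (hf : Monotone f) :
    ∃ m : X, Filter.Tendsto f Filter.atTop (𝓝 m) ∧ IsLUB (Set.range f) m := by
  haveI : (Filter.atTop : Filter J).NeBot := Filter.atTop_neBot_iff.2 ⟨‹_›, ‹_›⟩
  have key : ∀ m : X, MapClusterPt m (Filter.atTop : Filter J) f → IsLUB (Set.range f) m := by
    intro m hm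
    have hmem : ∀ s : Set X, s ∈ Filter.map f Filter.atTop → IsClosed s → m ∈ s := by
      intro s hs hsc
      have h1 : ClusterPt m (𝓟 s) := hm.clusterPt.mono (Filter.le_principal_iff.2 hs)
      exact hsc.closure_subset (mem_closure_iff_clusterPt.2 h1)
    constructor
    · rintro _ ⟨j, rfl⟩
      refine hmem {x : X | f j ≤ x} ?_ ?_
      · exact Filter.mem_map.2 ((Filter.eventually_ge_atTop j).mono fun i hi => hf hi)
      · exact hcl.preimage (by continuity : Continuous fun x : X => (f j, x))
    · intro c hc
      refine hmem {x : X | x ≤ c} ?_ ?_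
      · exact Filter.mem_map.2 (Filter.Eventually.of_forall fun i => hc ⟨i, rfl⟩)
      · exact hcl.preimage (by continuity : Continuous fun x : X => (x, c))
  obtain ⟨m, hm⟩ := exists_clusterPt_of_compactSpace (Filter.map f Filter.atTop)
  have hglb := key m hm
  exact ⟨m, tendsto_nhds_of_unique_mapClusterPt fun x hx => (key x hx).unique hglb, hglb⟩

end AuxNets

section ECCAux

open Filter Topology

variable {C : Type*} [ECCone C]

instance (priority := 100) ECCone.toCompactSpace : CompactSpace C := ECCone.compact
instance (priority := 100) ECCone.toT2Space : T2Space C := ECCone.t2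
instance (priority := 100) ECCone.toContinuousAdd : ContinuousAdd C := ⟨ECCone.continuous_add'⟩

theorem ECCone.le_of_add_eq {x y z : C} (h : x + z = y) : x ≤ y :=
  (ECCone.le_iff_exists_add x y).2 ⟨z, h⟩

theorem ECCone.add_le_add_left_ecc (c : C) {a b : C} (h : a ≤ b) : c + a ≤ c + b := by
  obtain ⟨z, hz⟩ := (ECCone.le_iff_exists_add a b).1 h
  exact ECCone.le_of_add_eq (by rw [add_assoc, hz])

theorem ECCone.monotone_of_additive {C D : Type*} [ECCone C] [ECCone D] {f : C → D}
    (hf : ∀ x y : C, f (x + y) = f x + f y) : Monotone f := fun a b hab => by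
  obtain ⟨z, hz⟩ := (ECCone.le_iff_exists_add a b).1 hab
  exact ECCone.le_of_add_eq (by rw [← hf, hz])

theorem ECCone.isClosed_le_ecc : IsClosed {p : C × C | p.1 ≤ p.2} := by
  have himg : {p : C × C | p.1 ≤ p.2} = (fun q : C × C => (q.1, q.1 + q.2)) '' Set.univ := by
    ext p
    constructor
    · intro hp
      obtain ⟨z, hz⟩ := (ECCone.le_iff_exists_add p.1 p.2).1 hp
      exact ⟨(p.1, z), trivial, Prod.ext rfl hz⟩
    · rintro ⟨⟨a, z⟩, -, rfl⟩
      exact ECCone.le_of_add_eq rfl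
  rw [himg]
  exact (isCompact_univ.image
    (continuous_fst.prodMk (continuous_fst.add continuous_snd))).isClosed

theorem ECCone.exists_greatest_addCompl {x y : C} (h : x ≤ y) :
    ∃ z : C, x + z = y ∧ ∀ w : C, x + w = y → w ≤ z := by
  obtain ⟨z0, hz0⟩ := (ECCone.le_iff_exists_add x y).1 h
  set Z : Set C := {z : C | x + z = y} with hZdef
  haveI : Nonempty Z := ⟨⟨z0, hz0⟩⟩
  haveI : IsDirected Z (· ≤ ·) := by
    constructor
    rintro ⟨a, ha⟩ ⟨b, hb⟩
    have ha' : x + a = y := ha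
    have hb' : x + b = y := hb
    refine ⟨⟨a ⊔ b, ?_⟩, ?_, ?_⟩
    · show x + (a ⊔ b) = y
      rw [ECCone.add_sup_distrib, ha', hb', sup_idem]
    · exact le_sup_left
    · exact le_sup_right
  obtain ⟨m, hmt, hml⟩ := aux_exists_tendsto_isLUB (ECCone.isClosed_le_ecc (C := C))
      (fun z : Z => (z : C)) (fun a b hab => hab)
  haveI : (Filter.atTop : Filter Z).NeBot := Filter.atTop_neBot_iff.2 ⟨‹_›, ‹_›⟩
  have hZc : IsClosed Z := isClosed_eq (continuous_const.add continuous_id) continuous_const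
  have hmZ : m ∈ Z := hZc.mem_of_tendsto hmt (Filter.Eventually.of_forall fun z => z.2)
  exact ⟨m, hmZ, fun w hw => hml.1 ⟨⟨w, hw⟩, rfl⟩⟩

end ECCAux
section LimitConstruction

open Filter Topology

variable {ι : Type*} [Preorder ι] [IsDirected ι (· ≤ ·)]
    {Cf : ι → Type*} [∀ i, ECCone (Cf i)]
    {φ : ∀ i j, j ≤ i → Cf i → Cf j}

theorem aux_dirSub (j : ι) : IsDirected {i : ι // j ≤ i} (· ≤ ·) := by
  constructor
  rintro ⟨a, ha⟩ ⟨b, hb⟩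
  obtain ⟨c, hac, hbc⟩ := directed_of (· ≤ ·) a b
  exact ⟨⟨c, ha.trans hac⟩, hac, hbc⟩

variable (φ) in
/-- Compatibility of a family with the bonding maps. -/
def LCompat (g : ∀ i, Cf i) : Prop := ∀ i j (h : j ≤ i), φ i j h (g i) = g j

variable (φ) in
def SupHarm (g : ∀ i, Cf i) : Prop := ∀ i j (h : j ≤ i), φ i j h (g i) ≤ g j

variable (φ) in
def SubHarm (g : ∀ i, Cf i) : Prop := ∀ i j (h : j ≤ i), g j ≤ φ i j h (g i)

variable (φ) in
def limNet (g : ∀ i, Cf i) (j : ι) : {i : ι // j ≤ i} → Cf j :=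
  fun i => φ i.1 j i.2 (g i.1)

section Hyps

variable (φ_add : ∀ i j (h : j ≤ i) (x y : Cf i), φ i j h (x + y) = φ i j h x + φ i j h y)
variable (φ_comp : ∀ i j k (hij : j ≤ i) (hjk : k ≤ j) (x : Cf i),
      φ j k hjk (φ i j hij x) = φ i k (hjk.trans hij) x)

theorem aux_incl_tendsto {j k : ι} (h : k ≤ j) :
    Filter.Tendsto (fun i : {i : ι // j ≤ i} => (⟨i.1, h.trans i.2⟩ : {i : ι // k ≤ i}))
      Filter.atTop Filter.atTop := by
  rw [Filter.tendsto_atTop]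
  intro b
  obtain ⟨c, hbc, hjc⟩ := directed_of (· ≤ ·) b.1 j
  filter_upwards [Filter.eventually_ge_atTop (⟨c, hjc⟩ : {i : ι // j ≤ i})] with a hca
  change b.1 ≤ a.1
  exact le_trans hbc (show c ≤ a.1 from hca)

theorem lcompat_supHarm {g : ∀ i, Cf i} (hg : LCompat φ g) : SupHarm φ g :=
  fun i j h => le_of_eq (hg i j h)

theorem lcompat_subHarm {g : ∀ i, Cf i} (hg : LCompat φ g) : SubHarm φ g :=
  fun i j h => le_of_eq (hg i j h).symm

set_option linter.unusedSectionVars false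

theorem lcompat_add
    (φ_add : ∀ i j (h : j ≤ i) (x y : Cf i), φ i j h (x + y) = φ i j h x + φ i j h y)
    {x y : ∀ i, Cf i} (hx : LCompat φ x) (hy : LCompat φ y) :
    LCompat φ (fun i => x i + y i) := by
  intro i j h
  show φ i j h (x i + y i) = x j + y j
  rw [φ_add i j h, hx i j h, hy i j h]

include φ_add φ_comp

theorem supHarm_inf {x y : ∀ i, Cf i} (hx : LCompat φ x) (hy : LCompat φ y) :
    SupHarm φ (fun i => x i ⊓ y i) := by
  intro i j h
  refine le_inf ?_ ?_
  · have := ECCone.monotone_of_additive (fun u v => φ_add i j h u v)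
      (inf_le_left : x i ⊓ y i ≤ x i)
    rwa [hx i j h] at this
  · have := ECCone.monotone_of_additive (fun u v => φ_add i j h u v)
      (inf_le_right : x i ⊓ y i ≤ y i)
    rwa [hy i j h] at this

theorem subHarm_sup {x y : ∀ i, Cf i} (hx : LCompat φ x) (hy : LCompat φ y) :
    SubHarm φ (fun i => x i ⊔ y i) := by
  intro i j h
  refine sup_le ?_ ?_
  · have := ECCone.monotone_of_additive (fun u v => φ_add i j h u v)
      (le_sup_left : x i ≤ x i ⊔ y i)
    rwa [hx i j h] at this
  · have := ECCone.monotone_of_additive (fun u v => φ_add i j h u v)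
      (le_sup_right : y i ≤ x i ⊔ y i)
    rwa [hy i j h] at this

theorem supHarm_add {x g : ∀ i, Cf i} (hx : LCompat φ x) (hg : SupHarm φ g) :
    SupHarm φ (fun i => x i + g i) := by
  intro i j h
  show φ i j h (x i + g i) ≤ x j + g j
  rw [φ_add i j h, hx i j h]
  exact ECCone.add_le_add_left_ecc _ (hg i j h)

theorem subHarm_add {x g : ∀ i, Cf i} (hx : LCompat φ x) (hg : SubHarm φ g) :
    SubHarm φ (fun i => x i + g i) := by
  intro i j h
  show x j + g j ≤ φ i j h (x i + g i)
  rw [φ_add i j h, hx i j h]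
  exact ECCone.add_le_add_left_ecc _ (hg i j h)

theorem limNet_antitone {g : ∀ i, Cf i} (hg : SupHarm φ g) (j : ι) :
    Antitone (limNet φ g j) := by
  rintro ⟨a, ha⟩ ⟨b, hb⟩ hab
  have hab' : a ≤ b := hab
  have h1 : φ b a hab' (g b) ≤ g a := hg b a hab'
  have h2 : φ a j ha (φ b a hab' (g b)) ≤ φ a j ha (g a) :=
    ECCone.monotone_of_additive (fun u v => φ_add a j ha u v) h1
  rw [φ_comp b a j hab' ha] at h2
  exact h2

theorem limNet_monotone {g : ∀ i, Cf i} (hg : SubHarm φ g) (j : ι) :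
    Monotone (limNet φ g j) := by
  rintro ⟨a, ha⟩ ⟨b, hb⟩ hab
  have hab' : a ≤ b := hab
  have h1 : g a ≤ φ b a hab' (g b) := hg b a hab'
  have h2 : φ a j ha (g a) ≤ φ a j ha (φ b a hab' (g b)) :=
    ECCone.monotone_of_additive (fun u v => φ_add a j ha u v) h1
  rw [φ_comp b a j hab' ha] at h2
  exact h2

theorem exists_regDown {g : ∀ i, Cf i} (hg : SupHarm φ g) (j : ι) :
    ∃ m : Cf j, Filter.Tendsto (limNet φ g j) Filter.atTop (𝓝 m) ∧
      IsGLB (Set.range (limNet φ g j)) m := by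
  haveI : Nonempty {i : ι // j ≤ i} := ⟨⟨j, le_refl j⟩⟩
  haveI := aux_dirSub (ι := ι) j
  exact aux_exists_tendsto_isGLB ECCone.isClosed_le_ecc _ (limNet_antitone φ_add φ_comp hg j)

theorem exists_regUp {g : ∀ i, Cf i} (hg : SubHarm φ g) (j : ι) :
    ∃ m : Cf j, Filter.Tendsto (limNet φ g j) Filter.atTop (𝓝 m) ∧
      IsLUB (Set.range (limNet φ g j)) m := by
  haveI : Nonempty {i : ι // j ≤ i} := ⟨⟨j, le_refl j⟩⟩
  haveI := aux_dirSub (ι := ι) j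
  exact aux_exists_tendsto_isLUB ECCone.isClosed_le_ecc _ (limNet_monotone φ_add φ_comp hg j)

noncomputable def regDown {g : ∀ i, Cf i} (hg : SupHarm φ g) (j : ι) : Cf j :=
  (exists_regDown φ_add φ_comp hg j).choose

noncomputable def regUp {g : ∀ i, Cf i} (hg : SubHarm φ g) (j : ι) : Cf j :=
  (exists_regUp φ_add φ_comp hg j).choose

theorem regDown_tendsto {g : ∀ i, Cf i} (hg : SupHarm φ g) (j : ι) :
    Filter.Tendsto (limNet φ g j) Filter.atTop (𝓝 (regDown φ_add φ_comp hg j)) :=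
  (exists_regDown φ_add φ_comp hg j).choose_spec.1

theorem regDown_isGLB {g : ∀ i, Cf i} (hg : SupHarm φ g) (j : ι) :
    IsGLB (Set.range (limNet φ g j)) (regDown φ_add φ_comp hg j) :=
  (exists_regDown φ_add φ_comp hg j).choose_spec.2

theorem regUp_tendsto {g : ∀ i, Cf i} (hg : SubHarm φ g) (j : ι) :
    Filter.Tendsto (limNet φ g j) Filter.atTop (𝓝 (regUp φ_add φ_comp hg j)) :=
  (exists_regUp φ_add φ_comp hg j).choose_spec.1

theorem regUp_isLUB {g : ∀ i, Cf i} (hg : SubHarm φ g) (j : ι) :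
    IsLUB (Set.range (limNet φ g j)) (regUp φ_add φ_comp hg j) :=
  (exists_regUp φ_add φ_comp hg j).choose_spec.2

theorem regDown_le (φ_id : ∀ i (h : i ≤ i) (x : Cf i), φ i i h x = x)
    {g : ∀ i, Cf i} (hg : SupHarm φ g) (j : ι) :
    regDown φ_add φ_comp hg j ≤ g j := by
  have h := (regDown_isGLB φ_add φ_comp hg j).1 ⟨⟨j, le_refl j⟩, rfl⟩
  rwa [show limNet φ g j ⟨j, le_refl j⟩ = g j from φ_id j (le_refl j) (g j)] at h

theorem le_regUp (φ_id : ∀ i (h : i ≤ i) (x : Cf i), φ i i h x = x)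
    {g : ∀ i, Cf i} (hg : SubHarm φ g) (j : ι) :
    g j ≤ regUp φ_add φ_comp hg j := by
  have h := (regUp_isLUB φ_add φ_comp hg j).1 ⟨⟨j, le_refl j⟩, rfl⟩
  rwa [show limNet φ g j ⟨j, le_refl j⟩ = g j from φ_id j (le_refl j) (g j)] at h

theorem le_regDown {g : ∀ i, Cf i} (hg : SupHarm φ g) {w : ∀ i, Cf i}
    (hw : LCompat φ w) (hle : ∀ i, w i ≤ g i) (j : ι) :
    w j ≤ regDown φ_add φ_comp hg j := by
  refine (regDown_isGLB φ_add φ_comp hg j).2 ?_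
  rintro _ ⟨i, rfl⟩
  have h1 := ECCone.monotone_of_additive (fun u v => φ_add i.1 j i.2 u v) (hle i.1)
  rwa [hw i.1 j i.2] at h1

theorem regUp_le {g : ∀ i, Cf i} (hg : SubHarm φ g) {w : ∀ i, Cf i}
    (hw : LCompat φ w) (hle : ∀ i, g i ≤ w i) (j : ι) :
    regUp φ_add φ_comp hg j ≤ w j := by
  refine (regUp_isLUB φ_add φ_comp hg j).2 ?_
  rintro _ ⟨i, rfl⟩
  have h1 := ECCone.monotone_of_additive (fun u v => φ_add i.1 j i.2 u v) (hle i.1)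
  rwa [hw i.1 j i.2] at h1

theorem regDown_compat (φ_cont : ∀ i j (h : j ≤ i), Continuous (φ i j h))
    {g : ∀ i, Cf i} (hg : SupHarm φ g) :
    LCompat φ (fun j => regDown φ_add φ_comp hg j) := by
  intro j k h
  haveI : Nonempty {i : ι // j ≤ i} := ⟨⟨j, le_refl j⟩⟩
  haveI := aux_dirSub (ι := ι) j
  haveI : (Filter.atTop : Filter {i : ι // j ≤ i}).NeBot :=
    Filter.atTop_neBot_iff.2 ⟨‹_›, ‹_›⟩
  have h1 : Filter.Tendsto (fun i : {i : ι // j ≤ i} => φ j k h (limNet φ g j i))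
      Filter.atTop (𝓝 (φ j k h (regDown φ_add φ_comp hg j))) :=
    ((φ_cont j k h).tendsto _).comp (regDown_tendsto φ_add φ_comp hg j)
  have h2 : Filter.Tendsto (fun i : {i : ι // j ≤ i} => φ j k h (limNet φ g j i))
      Filter.atTop (𝓝 (regDown φ_add φ_comp hg k)) := by
    have heq : (fun i : {i : ι // j ≤ i} => φ j k h (limNet φ g j i)) =
        (limNet φ g k) ∘ (fun i : {i : ι // j ≤ i} => (⟨i.1, h.trans i.2⟩ : {i : ι // k ≤ i})) := by
      funext i
      exact φ_comp i.1 j k i.2 h (g i.1)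
    rw [heq]
    exact (regDown_tendsto φ_add φ_comp hg k).comp (aux_incl_tendsto h)
  exact tendsto_nhds_unique h1 h2

theorem regUp_compat (φ_cont : ∀ i j (h : j ≤ i), Continuous (φ i j h))
    {g : ∀ i, Cf i} (hg : SubHarm φ g) :
    LCompat φ (fun j => regUp φ_add φ_comp hg j) := by
  intro j k h
  haveI : Nonempty {i : ι // j ≤ i} := ⟨⟨j, le_refl j⟩⟩
  haveI := aux_dirSub (ι := ι) j
  haveI : (Filter.atTop : Filter {i : ι // j ≤ i}).NeBot :=
    Filter.atTop_neBot_iff.2 ⟨‹_›, ‹_›⟩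
  have h1 : Filter.Tendsto (fun i : {i : ι // j ≤ i} => φ j k h (limNet φ g j i))
      Filter.atTop (𝓝 (φ j k h (regUp φ_add φ_comp hg j))) :=
    ((φ_cont j k h).tendsto _).comp (regUp_tendsto φ_add φ_comp hg j)
  have h2 : Filter.Tendsto (fun i : {i : ι // j ≤ i} => φ j k h (limNet φ g j i))
      Filter.atTop (𝓝 (regUp φ_add φ_comp hg k)) := by
    have heq : (fun i : {i : ι // j ≤ i} => φ j k h (limNet φ g j i)) =
        (limNet φ g k) ∘ (fun i : {i : ι // j ≤ i} => (⟨i.1, h.trans i.2⟩ : {i : ι // k ≤ i})) := by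
      funext i
      exact φ_comp i.1 j k i.2 h (g i.1)
    rw [heq]
    exact (regUp_tendsto φ_add φ_comp hg k).comp (aux_incl_tendsto h)
  exact tendsto_nhds_unique h1 h2

theorem regDown_congr {g g' : ∀ i, Cf i} (hg : SupHarm φ g) (hg' : SupHarm φ g')
    (hgg' : g = g') (j : ι) :
    regDown φ_add φ_comp hg j = regDown φ_add φ_comp hg' j := by subst hgg'; rfl

theorem regUp_congr {g g' : ∀ i, Cf i} (hg : SubHarm φ g) (hg' : SubHarm φ g')
    (hgg' : g = g') (j : ι) :
    regUp φ_add φ_comp hg j = regUp φ_add φ_comp hg' j := by subst hgg'; rfl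

theorem regDown_add {x : ∀ i, Cf i} (hx : LCompat φ x) {g : ∀ i, Cf i} (hg : SupHarm φ g)
    (hg' : SupHarm φ (fun i => x i + g i)) (j : ι) :
    x j + regDown φ_add φ_comp hg j = regDown φ_add φ_comp hg' j := by
  haveI : Nonempty {i : ι // j ≤ i} := ⟨⟨j, le_refl j⟩⟩
  haveI := aux_dirSub (ι := ι) j
  haveI : (Filter.atTop : Filter {i : ι // j ≤ i}).NeBot :=
    Filter.atTop_neBot_iff.2 ⟨‹_›, ‹_›⟩
  have h1 : Filter.Tendsto (fun i : {i : ι // j ≤ i} => x j + limNet φ g j i)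
      Filter.atTop (𝓝 (x j + regDown φ_add φ_comp hg j)) :=
    ((continuous_const.add continuous_id).tendsto _).comp (regDown_tendsto φ_add φ_comp hg j)
  have heq : (fun i : {i : ι // j ≤ i} => x j + limNet φ g j i) =
      limNet φ (fun i => x i + g i) j := by
    funext i
    show x j + φ i.1 j i.2 (g i.1) = φ i.1 j i.2 (x i.1 + g i.1)
    rw [φ_add i.1 j i.2, hx i.1 j i.2]
  rw [heq] at h1
  exact tendsto_nhds_unique h1 (regDown_tendsto φ_add φ_comp hg' j)

theorem regUp_add {x : ∀ i, Cf i} (hx : LCompat φ x) {g : ∀ i, Cf i} (hg : SubHarm φ g)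
    (hg' : SubHarm φ (fun i => x i + g i)) (j : ι) :
    x j + regUp φ_add φ_comp hg j = regUp φ_add φ_comp hg' j := by
  haveI : Nonempty {i : ι // j ≤ i} := ⟨⟨j, le_refl j⟩⟩
  haveI := aux_dirSub (ι := ι) j
  haveI : (Filter.atTop : Filter {i : ι // j ≤ i}).NeBot :=
    Filter.atTop_neBot_iff.2 ⟨‹_›, ‹_›⟩
  have h1 : Filter.Tendsto (fun i : {i : ι // j ≤ i} => x j + limNet φ g j i)
      Filter.atTop (𝓝 (x j + regUp φ_add φ_comp hg j)) :=
    ((continuous_const.add continuous_id).tendsto _).comp (regUp_tendsto φ_add φ_comp hg j)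
  have heq : (fun i : {i : ι // j ≤ i} => x j + limNet φ g j i) =
      limNet φ (fun i => x i + g i) j := by
    funext i
    show x j + φ i.1 j i.2 (g i.1) = φ i.1 j i.2 (x i.1 + g i.1)
    rw [φ_add i.1 j i.2, hx i.1 j i.2]
  rw [heq] at h1
  exact tendsto_nhds_unique h1 (regUp_tendsto φ_add φ_comp hg' j)

theorem regDown_of_compat (φ_id : ∀ i (h : i ≤ i) (x : Cf i), φ i i h x = x)
    {g : ∀ i, Cf i} (hgc : LCompat φ g) (hg : SupHarm φ g) (j : ι) :
    regDown φ_add φ_comp hg j = g j :=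
  le_antisymm (regDown_le φ_add φ_comp φ_id hg j)
    (le_regDown φ_add φ_comp hg hgc (fun _ => le_refl _) j)

theorem regUp_of_compat (φ_id : ∀ i (h : i ≤ i) (x : Cf i), φ i i h x = x)
    {g : ∀ i, Cf i} (hgc : LCompat φ g) (hg : SubHarm φ g) (j : ι) :
    regUp φ_add φ_comp hg j = g j :=
  le_antisymm (regUp_le φ_add φ_comp hg hgc (fun _ => le_refl _) j)
    (le_regUp φ_add φ_comp φ_id hg j)

end Hyps

end LimitConstruction
section LimitInstance

open Filter Topology

variable {ι : Type*} [Preorder ι] [IsDirected ι (· ≤ ·)]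
    {Cf : ι → Type*} [∀ i, ECCone (Cf i)]
    {φ : ∀ i j, j ≤ i → Cf i → Cf j}

variable (φ) in
def limAMonoid
    (φ_add : ∀ i j (h : j ≤ i) (x y : Cf i), φ i j h (x + y) = φ i j h x + φ i j h y)
    (φ_zero : ∀ i j (h : j ≤ i), φ i j h 0 = 0) :
    AddCommMonoid {x : ∀ i, Cf i // ∀ i j (h : j ≤ i), φ i j h (x i) = x j} :=
  letI : Add {x : ∀ i, Cf i // ∀ i j (h : j ≤ i), φ i j h (x i) = x j} :=
    ⟨fun x y => ⟨fun i => x.1 i + y.1 i, fun i j h => by rw [φ_add i j h, x.2 i j h, y.2 i j h]⟩⟩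
  letI : Zero {x : ∀ i, Cf i // ∀ i j (h : j ≤ i), φ i j h (x i) = x j} :=
    ⟨⟨fun i => 0, fun i j h => φ_zero i j h⟩⟩
  { add := (· + ·)
    zero := 0
    add_assoc := fun x y z => Subtype.ext (funext fun i => add_assoc _ _ _)
    zero_add := fun x => Subtype.ext (funext fun i => zero_add _)
    add_zero := fun x => Subtype.ext (funext fun i => add_zero _)
    add_comm := fun x y => Subtype.ext (funext fun i => add_comm _ _)
    nsmul := nsmulRec }

variable (φ) in
noncomputable def limLattice
    (φ_cont : ∀ i j (h : j ≤ i), Continuous (φ i j h))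
    (φ_add : ∀ i j (h : j ≤ i) (x y : Cf i), φ i j h (x + y) = φ i j h x + φ i j h y)
    (φ_id : ∀ i (h : i ≤ i) (x : Cf i), φ i i h x = x)
    (φ_comp : ∀ i j k (hij : j ≤ i) (hjk : k ≤ j) (x : Cf i),
      φ j k hjk (φ i j hij x) = φ i k (hjk.trans hij) x) :
    Lattice {x : ∀ i, Cf i // ∀ i j (h : j ≤ i), φ i j h (x i) = x j} where
  le x y := ∀ i, x.1 i ≤ y.1 i
  le_refl x i := le_refl _
  le_trans x y z h h' i := (h i).trans (h' i)
  le_antisymm x y h h' := Subtype.ext (funext fun i => le_antisymm (h i) (h' i))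
  inf x y := ⟨fun j => regDown φ_add φ_comp (supHarm_inf φ_add φ_comp x.2 y.2) j,
    regDown_compat φ_add φ_comp φ_cont (supHarm_inf φ_add φ_comp x.2 y.2)⟩
  inf_le_left x y j :=
    (regDown_le φ_add φ_comp φ_id (supHarm_inf φ_add φ_comp x.2 y.2) j).trans inf_le_left
  inf_le_right x y j :=
    (regDown_le φ_add φ_comp φ_id (supHarm_inf φ_add φ_comp x.2 y.2) j).trans inf_le_right
  le_inf x y z h1 h2 j :=
    le_regDown φ_add φ_comp (supHarm_inf φ_add φ_comp y.2 z.2) x.2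
      (fun i => le_inf (h1 i) (h2 i)) j
  sup x y := ⟨fun j => regUp φ_add φ_comp (subHarm_sup φ_add φ_comp x.2 y.2) j,
    regUp_compat φ_add φ_comp φ_cont (subHarm_sup φ_add φ_comp x.2 y.2)⟩
  le_sup_left x y j :=
    le_sup_left.trans (le_regUp φ_add φ_comp φ_id (subHarm_sup φ_add φ_comp x.2 y.2) j)
  le_sup_right x y j :=
    le_sup_right.trans (le_regUp φ_add φ_comp φ_id (subHarm_sup φ_add φ_comp x.2 y.2) j)
  sup_le x y z h1 h2 j :=
    regUp_le φ_add φ_comp (subHarm_sup φ_add φ_comp x.2 y.2) z.2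
      (fun i => sup_le (h1 i) (h2 i)) j

variable (φ) in
noncomputable def limECC
    (φ_cont : ∀ i j (h : j ≤ i), Continuous (φ i j h))
    (φ_add : ∀ i j (h : j ≤ i) (x y : Cf i), φ i j h (x + y) = φ i j h x + φ i j h y)
    (φ_zero : ∀ i j (h : j ≤ i), φ i j h 0 = 0)
    (φ_smul : ∀ i j (h : j ≤ i) (t : PosReal) (x : Cf i),
      φ i j h (ECCone.psmul t x) = ECCone.psmul t (φ i j h x))
    (φ_id : ∀ i (h : i ≤ i) (x : Cf i), φ i i h x = x)
    (φ_comp : ∀ i j k (hij : j ≤ i) (hjk : k ≤ j) (x : Cf i),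
      φ j k hjk (φ i j hij x) = φ i k (hjk.trans hij) x) :
    ECCone {x : ∀ i, Cf i // ∀ i j (h : j ≤ i), φ i j h (x i) = x j} where
  toAddCommMonoid := limAMonoid φ φ_add φ_zero
  toLattice := limLattice φ φ_cont φ_add φ_id φ_comp
  toTopologicalSpace := instTopologicalSpaceSubtype
  psmul t x := ⟨fun i => ECCone.psmul t (x.1 i), fun i j h => by rw [φ_smul i j h, x.2 i j h]⟩
  psmul_add t x y := Subtype.ext (funext fun i => ECCone.psmul_add t (x.1 i) (y.1 i))
  add_psmul s t x := Subtype.ext (funext fun i => ECCone.add_psmul s t (x.1 i))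
  psmul_mul s t x := Subtype.ext (funext fun i => ECCone.psmul_mul s t (x.1 i))
  one_psmul x := Subtype.ext (funext fun i => ECCone.one_psmul (x.1 i))
  psmul_zero t := Subtype.ext (funext fun i => ECCone.psmul_zero t)
  le_iff_exists_add x y := by
    constructor
    · intro hxy
      have hxy' : ∀ i, x.1 i ≤ y.1 i := hxy
      choose zm hzm1 hzm2 using fun i => ECCone.exists_greatest_addCompl (hxy' i)
      have hsup : SupHarm φ zm := by
        intro i j h
        apply hzm2 j
        have h3 : φ i j h (x.1 i + zm i) = φ i j h (y.1 i) := by rw [hzm1 i]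
        rw [φ_add i j h, x.2 i j h, y.2 i j h] at h3
        exact h3
      refine ⟨⟨fun j => regDown φ_add φ_comp hsup j, regDown_compat φ_add φ_comp φ_cont hsup⟩, ?_⟩
      apply Subtype.ext
      funext j
      show x.1 j + regDown φ_add φ_comp hsup j = y.1 j
      rw [regDown_add φ_add φ_comp x.2 hsup (supHarm_add φ_add φ_comp x.2 hsup) j]
      have hfun : (fun i => x.1 i + zm i) = y.1 := funext fun i => hzm1 i
      rw [regDown_congr φ_add φ_comp (supHarm_add φ_add φ_comp x.2 hsup)
        (lcompat_supHarm y.2) hfun j]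
      exact regDown_of_compat φ_add φ_comp φ_id y.2 (lcompat_supHarm y.2) j
    · rintro ⟨z, hz⟩ i
      have h1 : x.1 i + z.1 i = y.1 i := congrFun (congrArg Subtype.val hz) i
      exact ECCone.le_of_add_eq h1
  add_inf_distrib x y z := by
    apply Subtype.ext
    funext j
    show x.1 j + regDown φ_add φ_comp (supHarm_inf φ_add φ_comp y.2 z.2) j =
      regDown φ_add φ_comp (supHarm_inf φ_add φ_comp (lcompat_add φ_add x.2 y.2) (lcompat_add φ_add x.2 z.2)) j
    rw [regDown_add φ_add φ_comp x.2 (supHarm_inf φ_add φ_comp y.2 z.2)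
      (supHarm_add φ_add φ_comp x.2 (supHarm_inf φ_add φ_comp y.2 z.2)) j]
    exact regDown_congr φ_add φ_comp _ _
      (funext fun i => ECCone.add_inf_distrib (x.1 i) (y.1 i) (z.1 i)) j
  add_sup_distrib x y z := by
    apply Subtype.ext
    funext j
    show x.1 j + regUp φ_add φ_comp (subHarm_sup φ_add φ_comp y.2 z.2) j =
      regUp φ_add φ_comp (subHarm_sup φ_add φ_comp (lcompat_add φ_add x.2 y.2) (lcompat_add φ_add x.2 z.2)) j
    rw [regUp_add φ_add φ_comp x.2 (subHarm_sup φ_add φ_comp y.2 z.2)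
      (subHarm_add φ_add φ_comp x.2 (subHarm_sup φ_add φ_comp y.2 z.2)) j]
    exact regUp_congr φ_add φ_comp _ _
      (funext fun i => ECCone.add_sup_distrib (x.1 i) (y.1 i) (z.1 i)) j
  continuous_add' := by
    have h1 : Continuous fun p : {x : ∀ i, Cf i // ∀ i j (h : j ≤ i), φ i j h (x i) = x j} ×
        {x : ∀ i, Cf i // ∀ i j (h : j ≤ i), φ i j h (x i) = x j} =>
        (fun i => p.1.1 i + p.2.1 i : ∀ i, Cf i) := by
      apply continuous_pi
      intro i
      exact ((continuous_apply i).comp (continuous_subtype_val.comp continuous_fst)).add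
        ((continuous_apply i).comp (continuous_subtype_val.comp continuous_snd))
    exact h1.subtype_mk _
  continuous_psmul := by
    have h1 : Continuous fun p :
        PosReal × {x : ∀ i, Cf i // ∀ i j (h : j ≤ i), φ i j h (x i) = x j} =>
        (fun i => ECCone.psmul p.1 (p.2.1 i) : ∀ i, Cf i) := by
      apply continuous_pi
      intro i
      exact ECCone.continuous_psmul.comp (continuous_fst.prodMk
        ((continuous_apply i).comp (continuous_subtype_val.comp continuous_snd)))
    exact h1.subtype_mk _
  compact := by
    have hcl : IsClosed {x : ∀ i, Cf i | ∀ i j (h : j ≤ i), φ i j h (x i) = x j} := by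
      have hset : {x : ∀ i, Cf i | ∀ i j (h : j ≤ i), φ i j h (x i) = x j} =
          ⋂ (i) (j) (h : j ≤ i), {x : ∀ i, Cf i | φ i j h (x i) = x j} := by
        ext x
        simp only [Set.mem_iInter, Set.mem_setOf_eq]
      rw [hset]
      exact isClosed_iInter fun i => isClosed_iInter fun j => isClosed_iInter fun h =>
        isClosed_eq ((φ_cont i j h).comp (continuous_apply i)) (continuous_apply j)
    exact isCompact_iff_compactSpace.1 hcl.isCompact
  t2 := inferInstance
  locally_convex := by
    intro x U hU hxU
    obtain ⟨W, hWopen, hWeq⟩ := isOpen_induced_iff.1 hU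
    have hxW : x.1 ∈ W := by rw [← hWeq] at hxU; exact hxU
    obtain ⟨F, u, hFu, hpi⟩ := isOpen_pi_iff.1 hWopen x.1 hxW
    have hv : ∀ i : ι, ∃ v : Set (Cf i), IsOpen v ∧ x.1 i ∈ v ∧ (i ∈ F → v ⊆ u i) ∧
        ∀ y ∈ v, ∀ z ∈ v, ∀ s t : PosReal, s.1 + t.1 = 1 →
          ECCone.psmul s y + ECCone.psmul t z ∈ v := by
      intro i
      by_cases hi : i ∈ F
      · obtain ⟨v, hvo, hxv, hvu, hvc⟩ :=
          ECCone.locally_convex (x.1 i) (u i) (hFu i hi).1 (hFu i hi).2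
        exact ⟨v, hvo, hxv, fun _ => hvu, hvc⟩
      · exact ⟨Set.univ, isOpen_univ, trivial, fun h => absurd h hi,
          fun _ _ _ _ _ _ _ => trivial⟩
    choose v hvo hxv hvu hvc using hv
    refine ⟨Subtype.val ⁻¹' (F : Set ι).pi v, ?_, ?_, ?_, ?_⟩
    · exact (isOpen_set_pi F.finite_toSet fun i _ => hvo i).preimage continuous_subtype_val
    · exact fun i _ => hxv i
    · intro y hy
      have hyW : y.1 ∈ W := hpi (fun i hi => hvu i hi (hy i hi))
      rw [← hWeq]
      exact hyW
    · intro y hy z hz s t hst i hi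
      exact hvc i _ (hy i hi) _ (hz i hi) s t hst

end LimitInstance
/-- The projective limit of a projective system of extended Choquet cones
(over an upward directed index set, with continuous linear bonding maps), realized as the
compatible sequences in the product with coordinatewise operations and the induced product
topology, is again an extended Choquet cone. -/
theorem stmt_0 {ι : Type*} [Preorder ι] [IsDirected ι (· ≤ ·)]
    (Cf : ι → Type*) [∀ i, ECCone (Cf i)]
    (φ : ∀ i j, j ≤ i → Cf i → Cf j)
    (φ_cont : ∀ i j (h : j ≤ i), Continuous (φ i j h))
    (φ_add : ∀ i j (h : j ≤ i) (x y : Cf i), φ i j h (x + y) = φ i j h x + φ i j h y)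
    (φ_zero : ∀ i j (h : j ≤ i), φ i j h 0 = 0)
    (φ_smul : ∀ i j (h : j ≤ i) (t : PosReal) (x : Cf i),
      φ i j h (ECCone.psmul t x) = ECCone.psmul t (φ i j h x))
    (φ_id : ∀ i (h : i ≤ i) (x : Cf i), φ i i h x = x)
    (φ_comp : ∀ i j k (hij : j ≤ i) (hjk : k ≤ j) (x : Cf i),
      φ j k hjk (φ i j hij x) = φ i k (hjk.trans hij) x) :
    ∃ inst : ECCone {x : ∀ i, Cf i // ∀ i j (h : j ≤ i), φ i j h (x i) = x j},
      inst.toTopologicalSpace = instTopologicalSpaceSubtype ∧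
      (ECCone.zeroOf inst).1 = (fun _ => 0) ∧
      (∀ x y : {x : ∀ i, Cf i // ∀ i j (h : j ≤ i), φ i j h (x i) = x j},
        (ECCone.addOf inst x y).1 = fun i => x.1 i + y.1 i) ∧
      (∀ (t : PosReal) (x : {x : ∀ i, Cf i // ∀ i j (h : j ≤ i), φ i j h (x i) = x j}),
        (ECCone.psmul (self := inst) t x).1 = fun i => ECCone.psmul t (x.1 i)) := by

  exact ⟨limECC φ φ_cont φ_add φ_zero φ_smul φ_id φ_comp, rfl, rfl,
    fun _ _ => rfl, fun _ _ => rfl⟩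
end

section
/- Let C be an extended Choquet cone and let x ∈ C. Then the sequence ((1/n)·x)_{n∈ℕ} converges in C, and its limit is the support idempotent ε(x), i.e. ε(x) = lim_n (1/n)·x. -/
open scoped ENNReal NNReal

section Aux
open ECCone Filter Topology

variable {C : Type*} [ECCone C]

instance (priority := 100) : CompactSpace C := ECCone.compact
instance (priority := 100) : T2Space C := ECCone.t2

lemma psmul_natSucc (n : ℕ) (y : C) (hy : y + y = y) :
    ECCone.psmul ⟨(n : ℝ) + 1, by positivity⟩ y = y := by
  induction n with
  | zero =>
      have h1 : (⟨((0 : ℕ) : ℝ) + 1, by positivity⟩ : PosReal) = 1 :=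
        Subtype.ext (by norm_num)
      rw [h1, ECCone.one_psmul]
  | succ n ih =>
      have h1 : (⟨((n + 1 : ℕ) : ℝ) + 1, by positivity⟩ : PosReal)
          = (⟨(n : ℝ) + 1, by positivity⟩ : PosReal) + 1 :=
        Subtype.ext (by push_cast [Positive.coe_add, Positive.val_one]; ring)
      rw [h1, ECCone.add_psmul, ih, ECCone.one_psmul, hy]

lemma psmul_invSucc_idem (n : ℕ) (e : C) (hee : e + e = e) :
    ECCone.psmul ⟨1 / ((n : ℝ) + 1), by positivity⟩ e = e := by
  set t : PosReal := ⟨1 / ((n : ℝ) + 1), by positivity⟩ with ht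
  have hz : ECCone.psmul t e + ECCone.psmul t e = ECCone.psmul t e := by
    rw [← ECCone.psmul_add, hee]
  have hmul : (⟨(n : ℝ) + 1, by positivity⟩ : PosReal) * t = 1 := by
    apply Subtype.ext
    show ((n : ℝ) + 1) * (1 / ((n : ℝ) + 1)) = 1
    field_simp
  calc ECCone.psmul t e
      = ECCone.psmul ⟨(n : ℝ) + 1, by positivity⟩ (ECCone.psmul t e) :=
        (psmul_natSucc n _ hz).symm
    _ = ECCone.psmul 1 e := by rw [ECCone.psmul_mul, hmul]
    _ = e := ECCone.one_psmul e

end Aux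

/-- In an extended Choquet cone, for every `x` the sequence `((1/n)·x)ₙ`
converges and its limit is the support idempotent `ε(x)` of `x`. -/
theorem stmt_1 {C : Type*} [ECCone C] (x e : C) (he : ECCone.IsSuppIdem x e) :
    Filter.Tendsto
      (fun n : ℕ => ECCone.psmul ⟨1 / (n + 1 : ℝ), by positivity⟩ x)
      Filter.atTop (nhds e) := by
  classical
  open Filter Topology ECCone in
  obtain ⟨hxe, hmax⟩ := he
  -- `e` is idempotent
  have hee : e + e = e := by
    have h1 : e + e ≤ e := hmax _ (by rw [← add_assoc, hxe, hxe])
    have h2 : e ≤ e + e := (ECCone.le_iff_exists_add e (e + e)).2 ⟨e, rfl⟩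
    exact le_antisymm h1 h2
  set a : ℕ → C := fun n => ECCone.psmul ⟨1 / (n + 1 : ℝ), by positivity⟩ x with ha
  -- e + a n = a n for all n
  have hea : ∀ n, e + a n = a n := by
    intro n
    have hxe' : e + x = x := by rw [add_comm]; exact hxe
    calc e + a n
        = ECCone.psmul ⟨1 / (n + 1 : ℝ), by positivity⟩ e + a n := by
          rw [psmul_invSucc_idem n e hee]
      _ = ECCone.psmul ⟨1 / (n + 1 : ℝ), by positivity⟩ (e + x) := by
          rw [ECCone.psmul_add]
      _ = a n := by rw [hxe']
  -- the set {c | e + c = c} is closed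
  have hadd_cont : ∀ c : C, Continuous fun z : C => c + z := by
    intro c
    exact ECCone.continuous_add'.comp (continuous_const.prodMk continuous_id)
  have hSclosed : IsClosed {c : C | e + c = c} :=
    isClosed_eq (hadd_cont e) continuous_id
  -- x + a n tends to x
  have hx_add : Filter.Tendsto (fun n : ℕ => x + a n) Filter.atTop (nhds x) := by
    have hscal : Filter.Tendsto
        (fun n : ℕ => (⟨1 + 1 / (n + 1 : ℝ), by positivity⟩ : PosReal))
        Filter.atTop (nhds (1 : PosReal)) := by
      rw [tendsto_subtype_rng]
      have h0 : Filter.Tendsto (fun n : ℕ => 1 / (n + 1 : ℝ)) Filter.atTop (nhds 0) :=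
        tendsto_one_div_add_atTop_nhds_zero_nat
      have := tendsto_const_nhds.add h0 (f := fun _ : ℕ => (1 : ℝ)) (x := Filter.atTop)
      simpa [Positive.val_one] using this
    have hpair : Filter.Tendsto
        (fun n : ℕ => ((⟨1 + 1 / (n + 1 : ℝ), by positivity⟩ : PosReal), x))
        Filter.atTop (nhds ((1 : PosReal), x)) :=
      hscal.prodMk_nhds tendsto_const_nhds
    have h2 : Filter.Tendsto
        (fun n : ℕ => ECCone.psmul (⟨1 + 1 / (n + 1 : ℝ), by positivity⟩ : PosReal) x)
        Filter.atTop (nhds (ECCone.psmul 1 x)) :=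
      (ECCone.continuous_psmul.tendsto ((1 : PosReal), x)).comp hpair
    have heq : ∀ n : ℕ, x + a n
        = ECCone.psmul (⟨1 + 1 / (n + 1 : ℝ), by positivity⟩ : PosReal) x := by
      intro n
      have hsum : (⟨1 + 1 / (n + 1 : ℝ), by positivity⟩ : PosReal)
          = 1 + (⟨1 / (n + 1 : ℝ), by positivity⟩ : PosReal) :=
        Subtype.ext (by simp [Positive.coe_add, Positive.val_one])
      rw [hsum, ECCone.add_psmul, ECCone.one_psmul]
    rw [ECCone.one_psmul] at h2
    simpa only [← heq] using h2
  -- unique cluster point argument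
  apply tendsto_nhds_of_unique_mapClusterPt
  intro y hy
  -- x + y = x, hence y ≤ e
  have hcl : ClusterPt (x + y) (Filter.map (fun n : ℕ => x + a n) Filter.atTop) := by
    have := (hy.clusterPt.map (f := fun z : C => x + z)
      ((hadd_cont x).continuousAt) Filter.tendsto_map)
    simpa [Filter.map_map, Function.comp_def] using this
  have hxy : x + y = x := by
    have hne : (nhds (x + y) ⊓ nhds x).NeBot := hcl.mono hx_add
    exact t2_iff_nhds.1 (inferInstance : T2Space C) hne
  have hyle : y ≤ e := hmax y hxy
  -- e + y = y, hence e ≤ y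
  have hmem : y ∈ {c : C | e + c = c} := by
    have hle : Filter.map a Filter.atTop ≤ Filter.principal {c : C | e + c = c} := by
      rw [Filter.le_principal_iff, Filter.mem_map]
      exact Filter.Eventually.of_forall hea
    have : ClusterPt y (Filter.principal {c : C | e + c = c}) := hy.clusterPt.mono hle
    have := mem_closure_iff_clusterPt.2 this
    rwa [hSclosed.closure_eq] at this
  have hely : e ≤ y := (ECCone.le_iff_exists_add e y).2 ⟨y, hmem⟩
  exact le_antisymm hyle hely
end

section
/- Let C be an extended Choquet cone and let K ⊆ C be a nonempty closed convex subset. Then the map x ↦ ε(x) attains a maximum on K: there exists x₀ ∈ K such that ε(x) ≤ ε(x₀) for all x ∈ K. -/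
open scoped ENNReal NNReal

section Aux

open ECCone

variable {C : Type*} [ECCone C]

private lemma ecc_le_add_self (a b : C) : a ≤ a + b :=
  (ECCone.le_iff_exists_add a (a + b)).2 ⟨b, rfl⟩

/-- A PosReal `half` with value 1/2. -/
private noncomputable def half : PosReal := ⟨1/2, by norm_num⟩

private lemma psmul_two {w : C} (h : w + w = w) :
    ECCone.psmul (1 + 1 : PosReal) w = w := by
  rw [ECCone.add_psmul, ECCone.one_psmul, h]

private lemma psmul_half_idem {w : C} (h : w + w = w) :
    ECCone.psmul half w = w := by
  have h2 : ECCone.psmul half (ECCone.psmul (1 + 1 : PosReal) w) = ECCone.psmul half w := by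
    rw [psmul_two h]
  rw [ECCone.psmul_mul] at h2
  have : (half * (1 + 1) : PosReal) = 1 := by
    apply Subtype.ext
    show (half : PosReal).1 * ((1:PosReal).1 + (1:PosReal).1) = 1
    norm_num [half]
  rw [this, ECCone.one_psmul] at h2
  exact h2.symm

private lemma suppIdem_idem {x e : C} (h : ECCone.IsSuppIdem x e) : e + e = e := by
  have h1 : x + (e + e) = x := by rw [← add_assoc, h.1, h.1]
  exact le_antisymm (h.2 _ h1) (ecc_le_add_self e e)

end Aux

/-- In an extended Choquet cone, the support-idempotent map attains a
maximum on every nonempty closed convex subset. -/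
theorem stmt_2 {C : Type*} [ECCone C] (ε : C → C) (hε : ∀ x, ECCone.IsSuppIdem x (ε x))
    (K : Set C) (hKne : K.Nonempty) (hKcl : IsClosed K)
    (hKcv : ∀ x ∈ K, ∀ y ∈ K, ∀ s t : PosReal, s.1 + t.1 = 1 →
      ECCone.psmul s x + ECCone.psmul t y ∈ K) :
    ∃ x₀ ∈ K, ∀ x ∈ K, ε x ≤ ε x₀ := by
  classical
  haveI : CompactSpace C := ECCone.compact
  haveI : T2Space C := ECCone.t2
  -- the closed sets
  set F : K → Set C := fun i => {z : C | z + ε i.1 = z} with hF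
  have hFcl : ∀ i : K, IsClosed (F i) := by
    intro i
    have hc : Continuous fun z : C => z + ε i.1 :=
      ECCone.continuous_add'.comp (continuous_id.prodMk continuous_const)
    exact isClosed_eq hc continuous_id
  have hhalf : (half : PosReal).1 + (half : PosReal).1 = 1 := by norm_num [half]
  -- key step lemma
  have step : ∀ z ∈ K, ∀ a ∈ K,
      (ECCone.psmul half z + ECCone.psmul half a ∈ K) ∧
      (∀ w : C, z + w = z → w + w = w →
        (ECCone.psmul half z + ECCone.psmul half a) + w
          = ECCone.psmul half z + ECCone.psmul half a) ∧
      ((ECCone.psmul half z + ECCone.psmul half a) + ε a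
          = ECCone.psmul half z + ECCone.psmul half a) := by
    intro z hz a ha
    refine ⟨hKcv z hz a ha half half hhalf, ?_, ?_⟩
    · intro w hw hidem
      calc (ECCone.psmul half z + ECCone.psmul half a) + w
          = (ECCone.psmul half z + ECCone.psmul half w) + ECCone.psmul half a := by
            rw [psmul_half_idem hidem]; abel
        _ = ECCone.psmul half (z + w) + ECCone.psmul half a := by
            rw [ECCone.psmul_add]
        _ = ECCone.psmul half z + ECCone.psmul half a := by rw [hw]
    · calc (ECCone.psmul half z + ECCone.psmul half a) + ε a
          = ECCone.psmul half z + (ECCone.psmul half a + ECCone.psmul half (ε a)) := by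
            rw [psmul_half_idem (suppIdem_idem (hε a))]; abel
        _ = ECCone.psmul half z + ECCone.psmul half (a + ε a) := by rw [ECCone.psmul_add]
        _ = _ := by rw [(hε a).1]
  -- finite intersection property
  have hfin : ∀ u : Finset K, (K ∩ ⋂ i ∈ u, F i).Nonempty := by
    intro u
    induction u using Finset.induction_on with
    | empty => simpa using hKne
    | @insert a u ha ih =>
      obtain ⟨z, hzK, hzF⟩ := ih
      obtain ⟨hmem, hpres, hnew⟩ := step z hzK a.1 a.2
      refine ⟨ECCone.psmul half z + ECCone.psmul half a.1, hmem, Set.mem_iInter₂.2 ?_⟩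
      intro i hi
      rcases Finset.mem_insert.1 hi with rfl | hi
      · exact hnew
      · exact hpres (ε i.1) (Set.mem_iInter₂.1 hzF i hi) (suppIdem_idem (hε i.1))
  -- compactness
  have hKcp : IsCompact K := hKcl.isCompact
  have hne : (K ∩ ⋂ i : K, F i).Nonempty :=
    hKcp.inter_iInter_nonempty F hFcl hfin
  obtain ⟨x₀, hx₀K, hx₀F⟩ := hne
  refine ⟨x₀, hx₀K, fun x hx => ?_⟩
  have : x₀ + ε x = x₀ := by
    have := Set.mem_iInter.1 hx₀F ⟨x, hx⟩
    exact this
  exact (hε x₀).2 _ this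
end

section
/- Let C be an extended Choquet cone. The following are equivalent: (i) for any two idempotents w₁ ≤ w₂ of C with w₁ ≠ w₂ such that w₁ is compact relative to w₂, there exists x ∈ C with w₁ ≤ x ≤ w₂ such that x is not an idempotent; (ii) for every idempotent w ∈ C the set {x ∈ C : x ≤ w} is connected. Moreover, if these equivalent conditions hold, then the element x in (i) may always be chosen such that ε(x) = w₁. -/
open scoped ENNReal NNReal

namespace ECCone

section Helpers

open Topology Filter

variable {C : Type*} [ECCone C]

instance : CompactSpace C := ECCone.compact
instance : T2Space C := ECCone.t2

/-! ### Order basics -/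

lemma zero_le' (x : C) : (0 : C) ≤ x := (le_iff_exists_add 0 x).2 ⟨x, zero_add x⟩

lemma le_add_right' (x z : C) : x ≤ x + z := (le_iff_exists_add _ _).2 ⟨z, rfl⟩

lemma le_add_left' (x z : C) : x ≤ z + x := add_comm z x ▸ le_add_right' x z

lemma add_le_add_right' {x y : C} (h : x ≤ y) (c : C) : x + c ≤ y + c := by
  obtain ⟨z, hz⟩ := (le_iff_exists_add x y).1 h
  exact (le_iff_exists_add _ _).2 ⟨z, by rw [add_right_comm, hz]⟩

lemma add_le_add' {x y a b : C} (h1 : x ≤ y) (h2 : a ≤ b) : x + a ≤ y + b := by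
  refine (add_le_add_right' h1 a).trans ?_
  rw [add_comm y a, add_comm y b]
  exact add_le_add_right' h2 y

lemma psmul_le_psmul' (t : PosReal) {x y : C} (h : x ≤ y) : psmul t x ≤ psmul t y := by
  obtain ⟨z, hz⟩ := (le_iff_exists_add x y).1 h
  exact (le_iff_exists_add _ _).2 ⟨psmul t z, by rw [← psmul_add, hz]⟩

lemma psmul_le_of_le_scalar {s t : PosReal} (h : s.1 ≤ t.1) (x : C) :
    psmul s x ≤ psmul t x := by
  rcases eq_or_lt_of_le h with h' | h'
  · rw [show s = t from Subtype.ext h']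
  · have ht : t = s + ⟨t.1 - s.1, sub_pos.2 h'⟩ := Subtype.ext (by simp)
    rw [ht, add_psmul]
    exact le_add_right' _ _

/-! ### Idempotents -/

lemma isIdem_zero : IsIdem (0 : C) := add_zero 0

lemma IsIdem.add' {v w : C} (hv : IsIdem v) (hw : IsIdem w) : IsIdem (v + w) := by
  show v + w + (v + w) = v + w
  rw [add_add_add_comm, hv, hw]

lemma IsIdem.inf' {v w : C} (hv : IsIdem v) (hw : IsIdem w) : IsIdem (v ⊓ w) := by
  show (v ⊓ w) + (v ⊓ w) = v ⊓ w
  have h1 : (v ⊓ w) + v = v := by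
    rw [add_comm, add_inf_distrib, hv]
    exact inf_eq_left.2 (le_add_right' v w)
  have h2 : (v ⊓ w) + w = w := by
    rw [add_comm, add_inf_distrib, hw]
    exact inf_eq_right.2 (le_add_right' w v)
  calc (v ⊓ w) + (v ⊓ w) = ((v ⊓ w) + v) ⊓ ((v ⊓ w) + w) := add_inf_distrib _ v w
  _ = v ⊓ w := by rw [h1, h2]

lemma le_idem_iff {w : C} (hw : IsIdem w) (x : C) : x ≤ w ↔ x + w = w := by
  constructor
  · intro h
    refine le_antisymm ?_ (le_add_left' w x)
    calc x + w ≤ w + w := add_le_add_right' h w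
    _ = w := hw
  · intro h
    exact h ▸ le_add_right' x w

lemma add_idem_of_le {w x : C} (hw : IsIdem w) (h : w ≤ x) : x + w = x := by
  obtain ⟨z, hz⟩ := (le_iff_exists_add w x).1 h
  rw [← hz, add_right_comm, hw]

lemma idem_inf_add {a : C} (ha : IsIdem a) (b c : C) :
    a ⊓ (b + c) = (a ⊓ b) + (a ⊓ c) := by
  have h1 : (a ⊓ b) + a = a := by
    rw [add_comm, add_inf_distrib, ha]
    exact inf_eq_left.2 (le_add_right' a b)
  have h2 : (a ⊓ b) + c = (c + a) ⊓ (c + b) := by rw [add_comm, add_inf_distrib]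
  have key : (a ⊓ b) + (a ⊓ c) = a ⊓ ((c + a) ⊓ (c + b)) := by
    rw [add_inf_distrib (a ⊓ b) a c, h1, h2]
  rw [key]
  refine le_antisymm (le_inf inf_le_left (le_inf ?_ ?_)) (le_inf inf_le_left ?_)
  · exact inf_le_left.trans (le_add_left' a c)
  · exact inf_le_right.trans (le_of_eq (add_comm b c))
  · exact inf_le_right.trans (inf_le_right.trans (le_of_eq (add_comm c b)))

lemma psmul_ofNat_idem {w : C} (hw : IsIdem w) :
    ∀ n : ℕ, psmul ⟨(n : ℝ) + 1, by positivity⟩ w = w := by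
  intro n
  induction n with
  | zero =>
      rw [show (⟨((0 : ℕ) : ℝ) + 1, by positivity⟩ : PosReal) = 1 from Subtype.ext (by norm_num)]
      exact one_psmul w
  | succ k ih =>
      have h : (⟨((k + 1 : ℕ) : ℝ) + 1, by positivity⟩ : PosReal)
          = ⟨(k : ℝ) + 1, by positivity⟩ + 1 := Subtype.ext (by
            show ((k + 1 : ℕ) : ℝ) + 1 = ((k : ℝ) + 1) + 1
            push_cast; ring)
      rw [h, add_psmul, ih, one_psmul, hw]

lemma isIdem_psmul {w : C} (hw : IsIdem w) (t : PosReal) : IsIdem (psmul t w) := by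
  show psmul t w + psmul t w = psmul t w
  rw [← psmul_add, hw]

lemma le_psmul_self_of_idem {w : C} (hw : IsIdem w) (t : PosReal) : w ≤ psmul t w := by
  have hidem : IsIdem (psmul t w) := isIdem_psmul hw t
  obtain ⟨n, hn⟩ := exists_nat_gt (1 / t.1)
  have htn : 1 ≤ ((n : ℝ) + 1) * t.1 := by
    rw [div_lt_iff₀ t.2] at hn
    nlinarith [t.2]
  have key : psmul (⟨(n : ℝ) + 1, by positivity⟩ * t) w = psmul t w := by
    rw [← psmul_mul, psmul_ofNat_idem hidem n]
  have h2 : psmul 1 w ≤ psmul (⟨(n : ℝ) + 1, by positivity⟩ * t) w :=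
    psmul_le_of_le_scalar htn w
  rw [one_psmul, key] at h2
  exact h2

lemma psmul_idem {w : C} (hw : IsIdem w) (t : PosReal) : psmul t w = w := by
  refine le_antisymm ?_ (le_psmul_self_of_idem hw t)
  have hidem : IsIdem (psmul t w) := isIdem_psmul hw t
  have h2 := le_psmul_self_of_idem hidem ⟨t.1⁻¹, inv_pos.2 t.2⟩
  have h3 : psmul ⟨t.1⁻¹, inv_pos.2 t.2⟩ (psmul t w) = w := by
    rw [psmul_mul,
      show (⟨t.1⁻¹, inv_pos.2 t.2⟩ : PosReal) * t = 1 from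
        Subtype.ext (inv_mul_cancel₀ (ne_of_gt t.2)), one_psmul]
  rw [h3] at h2
  exact h2

/-! ### Topology -/

lemma continuous_add_left' (c : C) : Continuous fun x : C => x + c :=
  continuous_add'.comp (continuous_id.prodMk continuous_const)

lemma continuous_psmul_right (x : C) : Continuous fun t : PosReal => psmul t x :=
  continuous_psmul.comp (continuous_id.prodMk continuous_const)

lemma isClosed_le_pair : IsClosed {p : C × C | p.1 ≤ p.2} := by
  have hf : Continuous fun q : C × C => (q.1, q.1 + q.2) :=
    continuous_fst.prodMk continuous_add'
  have hr : Set.range (fun q : C × C => (q.1, q.1 + q.2)) = {p : C × C | p.1 ≤ p.2} := by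
    ext p
    constructor
    · rintro ⟨q, rfl⟩
      exact le_add_right' _ _
    · intro hp
      obtain ⟨z, hz⟩ := (le_iff_exists_add _ _).1 hp
      exact ⟨(p.1, z), by dsimp only; rw [hz]⟩
  rw [← hr]
  exact (isCompact_range hf).isClosed

lemma isClosed_le_const (a : C) : IsClosed {y : C | y ≤ a} :=
  isClosed_le_pair.preimage (continuous_id.prodMk continuous_const)

lemma isClosed_const_le (a : C) : IsClosed {y : C | a ≤ y} :=
  isClosed_le_pair.preimage ((continuous_const (y := a)).prodMk continuous_id)

lemma isClosed_isIdem : IsClosed {x : C | IsIdem x} :=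
  isClosed_eq (continuous_add'.comp (continuous_id.prodMk continuous_id)) continuous_id

/-! ### Existence of directed infima / suprema -/

lemma exists_isGLB_mem_closure {S : Set C} (hne : S.Nonempty)
    (hdir : DirectedOn (· ≥ ·) S) : ∃ m : C, IsGLB S m ∧ m ∈ closure S := by
  haveI : Nonempty S := hne.to_subtype
  set F : S → Set C := fun s => closure {y ∈ S | y ≤ s.1} with hF
  have hdirF : Directed (· ⊇ ·) F := by
    rintro ⟨s, hs⟩ ⟨t, ht⟩
    obtain ⟨u, hu, hus, hut⟩ := hdir s hs t ht
    exact ⟨⟨u, hu⟩, closure_mono (fun y hy => ⟨hy.1, hy.2.trans hus⟩),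
      closure_mono (fun y hy => ⟨hy.1, hy.2.trans hut⟩)⟩
  have hne' : ∀ s : S, (F s).Nonempty := fun ⟨s, hs⟩ => ⟨s, subset_closure ⟨hs, le_rfl⟩⟩
  obtain ⟨m, hm⟩ := IsCompact.nonempty_iInter_of_directed_nonempty_isCompact_isClosed F hdirF
    hne' (fun s => isClosed_closure.isCompact) (fun s => isClosed_closure)
  rw [Set.mem_iInter] at hm
  refine ⟨m, ⟨?_, ?_⟩, ?_⟩
  · intro s hs
    exact closure_minimal (fun y hy => hy.2) (isClosed_le_const s) (hm ⟨s, hs⟩)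
  · intro c hc
    obtain ⟨s, hs⟩ := hne
    exact closure_minimal (fun y hy => hc hy.1) (isClosed_const_le c) (hm ⟨s, hs⟩)
  · obtain ⟨s, hs⟩ := hne
    exact closure_mono (fun y hy => hy.1) (hm ⟨s, hs⟩)

lemma exists_isLUB_mem_closure {S : Set C} (hne : S.Nonempty)
    (hdir : DirectedOn (· ≤ ·) S) : ∃ m : C, IsLUB S m ∧ m ∈ closure S := by
  haveI : Nonempty S := hne.to_subtype
  set F : S → Set C := fun s => closure {y ∈ S | s.1 ≤ y} with hF
  have hdirF : Directed (· ⊇ ·) F := by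
    rintro ⟨s, hs⟩ ⟨t, ht⟩
    obtain ⟨u, hu, hus, hut⟩ := hdir s hs t ht
    exact ⟨⟨u, hu⟩, closure_mono (fun y hy => ⟨hy.1, hus.trans hy.2⟩),
      closure_mono (fun y hy => ⟨hy.1, hut.trans hy.2⟩)⟩
  have hne' : ∀ s : S, (F s).Nonempty := fun ⟨s, hs⟩ => ⟨s, subset_closure ⟨hs, le_rfl⟩⟩
  obtain ⟨m, hm⟩ := IsCompact.nonempty_iInter_of_directed_nonempty_isCompact_isClosed F hdirF
    hne' (fun s => isClosed_closure.isCompact) (fun s => isClosed_closure)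
  rw [Set.mem_iInter] at hm
  refine ⟨m, ⟨?_, ?_⟩, ?_⟩
  · intro s hs
    exact closure_minimal (fun y hy => hy.2) (isClosed_const_le s) (hm ⟨s, hs⟩)
  · intro c hc
    obtain ⟨s, hs⟩ := hne
    exact closure_minimal (fun y hy => hc hy.1) (isClosed_le_const c) (hm ⟨s, hs⟩)
  · obtain ⟨s, hs⟩ := hne
    exact closure_mono (fun y hy => hy.1) (hm ⟨s, hs⟩)

/-! ### The scaling orbit of a point -/

/-- The scaling orbit of `x`. -/
def orbit (x : C) : Set C := Set.range fun t : PosReal => psmul t x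

lemma mem_orbit_self (x : C) : x ∈ orbit x := ⟨1, one_psmul x⟩

lemma orbit_nonempty (x : C) : (orbit x).Nonempty := ⟨x, mem_orbit_self x⟩

lemma orbit_directed_ge (x : C) : DirectedOn (· ≥ ·) (orbit x) := by
  rintro _ ⟨s, rfl⟩ _ ⟨t, rfl⟩
  refine ⟨psmul ⟨min s.1 t.1, lt_min s.2 t.2⟩ x, ⟨_, rfl⟩, ?_, ?_⟩
  · exact psmul_le_of_le_scalar (min_le_left _ _) x
  · exact psmul_le_of_le_scalar (min_le_right _ _) x

lemma orbit_directed_le (x : C) : DirectedOn (· ≤ ·) (orbit x) := by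
  rintro _ ⟨s, rfl⟩ _ ⟨t, rfl⟩
  refine ⟨psmul ⟨max s.1 t.1, lt_max_of_lt_left s.2⟩ x, ⟨_, rfl⟩, ?_, ?_⟩
  · exact psmul_le_of_le_scalar (le_max_left _ _) x
  · exact psmul_le_of_le_scalar (le_max_right _ _) x

lemma orbit_subset_le {x w : C} (hw : IsIdem w) (h : x ≤ w) : orbit x ⊆ {y : C | y ≤ w} := by
  rintro _ ⟨t, rfl⟩
  exact (psmul_le_psmul' t h).trans_eq (psmul_idem hw t)

lemma isConnected_closure_orbit (x : C) : IsConnected (closure (orbit x)) := by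
  haveI : ConnectedSpace PosReal := Subtype.connectedSpace (isConnected_Ioi (a := (0 : ℝ)))
  exact (isConnected_range (continuous_psmul_right x)).closure

/-- The support idempotent exists and is the infimum of the orbit. -/
lemma exists_suppIdem (x : C) :
    ∃ e : C, IsSuppIdem x e ∧ IsIdem e ∧ IsGLB (orbit x) e ∧ e ∈ closure (orbit x) := by
  obtain ⟨m, hglb, hmem⟩ := exists_isGLB_mem_closure (orbit_nonempty x) (orbit_directed_ge x)
  have hlbm : ∀ t : PosReal, m ≤ psmul t x := fun t => hglb.1 ⟨t, rfl⟩
  -- x + m = x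
  have hxm : x + m = x := by
    refine le_antisymm ?_ (le_add_right' x m)
    have hseq : ∀ n : ℕ, x + m ≤ psmul ⟨1 + 1 / ((n : ℝ) + 1), by positivity⟩ x := by
      intro n
      have e : (⟨1 + 1 / ((n : ℝ) + 1), by positivity⟩ : PosReal)
          = 1 + ⟨1 / ((n : ℝ) + 1), by positivity⟩ := Subtype.ext rfl
      rw [e, add_psmul, one_psmul]
      exact add_le_add' le_rfl (hlbm _)
    have htend : Filter.Tendsto
        (fun n : ℕ => psmul ⟨1 + 1 / ((n : ℝ) + 1), by positivity⟩ x) Filter.atTop (𝓝 x) := by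
      have hs : Filter.Tendsto (fun n : ℕ => (⟨1 + 1 / ((n : ℝ) + 1), by positivity⟩ : PosReal))
          Filter.atTop (𝓝 1) := by
        rw [tendsto_subtype_rng]
        have := tendsto_one_div_add_atTop_nhds_zero_nat (𝕜 := ℝ)
        have h0 : Filter.Tendsto (fun n : ℕ => 1 + 1 / ((n : ℝ) + 1)) Filter.atTop (𝓝 (1 + 0)) :=
          Filter.Tendsto.add tendsto_const_nhds this
        simpa using h0
      have := (continuous_psmul.tendsto ((1 : PosReal), x)).comp
        (hs.prodMk_nhds (tendsto_const_nhds (x := x)))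
      simpa [one_psmul, Function.comp_def] using this
    exact (isClosed_const_le (x + m)).mem_of_tendsto htend (Filter.Eventually.of_forall hseq)
  -- maximality
  have hmax : ∀ z : C, x + z = x → z ≤ m := by
    intro z hz
    refine hglb.2 ?_
    rintro _ ⟨t, rfl⟩
    obtain ⟨n, hn⟩ := exists_nat_gt (1 / t.1)
    have htn : 1 ≤ ((n : ℝ) + 1) * t.1 := by
      rw [div_lt_iff₀ t.2] at hn
      nlinarith [t.2]
    have hnz : ∀ k : ℕ, x + psmul ⟨(k : ℝ) + 1, by positivity⟩ z = x := by
      intro k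
      induction k with
      | zero =>
          rw [show (⟨((0 : ℕ) : ℝ) + 1, by positivity⟩ : PosReal) = 1 from
            Subtype.ext (by norm_num), one_psmul]
          exact hz
      | succ j ih =>
          have h : (⟨((j + 1 : ℕ) : ℝ) + 1, by positivity⟩ : PosReal)
              = ⟨(j : ℝ) + 1, by positivity⟩ + 1 := Subtype.ext (by
                show ((j + 1 : ℕ) : ℝ) + 1 = ((j : ℝ) + 1) + 1
                push_cast; ring)
          rw [h, add_psmul, one_psmul, ← add_assoc, ih, hz]
    -- scale by t
    have h1 : psmul t x + psmul (t * ⟨(n : ℝ) + 1, by positivity⟩) z = psmul t x := by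
      have := congrArg (psmul t) (hnz n)
      rw [psmul_add, psmul_mul] at this
      exact this
    have h2 : z ≤ psmul (t * ⟨(n : ℝ) + 1, by positivity⟩) z := by
      have := psmul_le_of_le_scalar (s := 1) (t := t * ⟨(n : ℝ) + 1, by positivity⟩)
        (by show (1 : ℝ) ≤ t.1 * ((n : ℝ) + 1); rw [mul_comm]; exact htn) z
      rwa [one_psmul] at this
    exact h2.trans ((le_add_left' _ _).trans_eq h1)
  have hidem : IsIdem m := by
    show m + m = m
    refine le_antisymm (hglb.2 ?_) (le_add_right' m m)
    rintro _ ⟨t, rfl⟩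
    have h1 : m ≤ psmul ⟨t.1 / 2, half_pos t.2⟩ x := hlbm _
    have h2 := add_le_add' h1 h1
    rw [← add_psmul] at h2
    exact h2.trans_eq (by congr 1; exact Subtype.ext (by
      show t.1 / 2 + t.1 / 2 = t.1
      ring))
  exact ⟨m, ⟨hxm, hmax⟩, hidem, hglb, hmem⟩

lemma suppIdem_unique {x e e' : C} (h : IsSuppIdem x e) (h' : IsSuppIdem x e') : e = e' :=
  le_antisymm (h'.2 e h.1) (h.2 e' h'.1)

lemma IsSuppIdem.le_self {x e : C} (h : IsSuppIdem x e) : e ≤ x :=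
  (le_add_left' e x).trans_eq h.1

lemma IsSuppIdem.isIdem {x e : C} (h : IsSuppIdem x e) : IsIdem e := by
  refine le_antisymm (h.2 _ ?_) (le_add_right' e e)
  rw [← add_assoc, h.1, h.1]

lemma IsSuppIdem.eq_of_isIdem {x e : C} (h : IsSuppIdem x e) (hx : IsIdem x) : e = x :=
  le_antisymm h.le_self (h.2 x hx)

/-- The idempotent above `x`: the supremum of the orbit. -/
lemma exists_idem_above (x : C) :
    ∃ u : C, IsIdem u ∧ x ≤ u ∧ IsLUB (orbit x) u ∧ u ∈ closure (orbit x) := by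
  obtain ⟨u, hlub, hmem⟩ := exists_isLUB_mem_closure (orbit_nonempty x) (orbit_directed_le x)
  have hub : ∀ t : PosReal, psmul t x ≤ u := fun t => hlub.1 ⟨t, rfl⟩
  have hidem : IsIdem u := by
    set s : PosReal := ⟨2, two_pos⟩ with hs
    have hlub2 : IsLUB (orbit x) (psmul s u) := by
      constructor
      · rintro _ ⟨t, rfl⟩
        show psmul t x ≤ psmul s u
        have hsr : s * ⟨t.1 / 2, half_pos t.2⟩ = t := Subtype.ext (by
          show (2 : ℝ) * (t.1 / 2) = t.1
          ring)
        have h2 := psmul_le_psmul' s (hub ⟨t.1 / 2, half_pos t.2⟩)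
        rw [psmul_mul, hsr] at h2
        exact h2
      · intro c hc
        have hru : u ≤ psmul ⟨1 / 2, by norm_num⟩ c := by
          refine hlub.2 ?_
          rintro _ ⟨t, rfl⟩
          show psmul t x ≤ psmul ⟨1 / 2, by norm_num⟩ c
          have h3 : psmul (s * t) x ≤ c := hc ⟨s * t, rfl⟩
          have h4 := psmul_le_psmul' (⟨1 / 2, by norm_num⟩ : PosReal) h3
          rw [psmul_mul] at h4
          have he : (⟨1 / 2, by norm_num⟩ : PosReal) * (s * t) = t := Subtype.ext (by
            show (1 / 2 : ℝ) * (2 * t.1) = t.1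
            ring)
          rwa [he] at h4
        have h5 := psmul_le_psmul' s hru
        rw [psmul_mul] at h5
        have he2 : s * ⟨1 / 2, by norm_num⟩ = 1 := Subtype.ext (by
          show (2 : ℝ) * (1 / 2) = 1
          norm_num)
        rwa [he2, one_psmul] at h5
    have he : psmul s u = u := hlub2.unique hlub
    show u + u = u
    have h6 : u + u = psmul (1 + 1) u := by rw [add_psmul, one_psmul]
    rw [h6, show (1 + 1 : PosReal) = s from Subtype.ext (show (1 : ℝ) + 1 = 2 by norm_num), he]
  exact ⟨u, hidem, hlub.1 (mem_orbit_self x), hlub, hmem⟩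

/-! ### Zorn wrappers -/

lemma zorn_min_set (s : Set C)
    (ih : ∀ c ⊆ s, IsChain (· ≤ ·) c → ∃ lb ∈ s, ∀ z ∈ c, lb ≤ z) :
    ∃ m ∈ s, ∀ z ∈ s, z ≤ m → z = m := by
  obtain ⟨m, hm⟩ := zorn_le₀ (α := Cᵒᵈ) s (fun c hc hchain => by
    obtain ⟨lb, hlb, h⟩ := ih c hc (fun a ha b hb hne => (hchain ha hb hne).symm)
    exact ⟨lb, hlb, fun z hz => h z hz⟩)
  exact ⟨m, hm.1, fun z hz hzm => le_antisymm hzm (hm.2 hz hzm)⟩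

lemma zorn_max_set (s : Set C)
    (ih : ∀ c ⊆ s, IsChain (· ≤ ·) c → ∃ ub ∈ s, ∀ z ∈ c, z ≤ ub) :
    ∃ m ∈ s, ∀ z ∈ s, m ≤ z → z = m := by
  obtain ⟨m, hm⟩ := zorn_le₀ s ih
  exact ⟨m, hm.1, fun z hz hmz => le_antisymm (hm.2 hz hmz) hmz⟩

lemma chain_directedOn_ge {c : Set C} (h : IsChain (· ≤ ·) c) : DirectedOn (· ≥ ·) c := by
  intro x hx y hy
  rcases h.total hx hy with hxy | hyx
  · exact ⟨x, hx, le_refl x, hxy⟩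
  · exact ⟨y, hy, hyx, le_refl y⟩

lemma chain_directedOn_le {c : Set C} (h : IsChain (· ≤ ·) c) : DirectedOn (· ≤ ·) c := by
  intro x hx y hy
  rcases h.total hx hy with hxy | hyx
  · exact ⟨y, hy, hxy, le_refl y⟩
  · exact ⟨x, hx, le_refl x, hyx⟩

/-! ### Splitting a preconnected set -/

lemma not_preconnected_split {S A B : Set C} (hS : IsPreconnected S) (hSub : S ⊆ A ∪ B)
    (hA : IsClosed A) (hB : IsClosed B) (hdisj : A ∩ B = ∅)
    (hSA : (S ∩ A).Nonempty) (hSB : (S ∩ B).Nonempty) : False := by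
  have hcov : S ⊆ Bᶜ ∪ Aᶜ := by
    intro p hp
    rcases hSub hp with h | h
    · exact Or.inl (fun hpB => Set.eq_empty_iff_forall_notMem.1 hdisj p ⟨h, hpB⟩)
    · exact Or.inr (fun hpA => Set.eq_empty_iff_forall_notMem.1 hdisj p ⟨hpA, h⟩)
  have h1 : (S ∩ Bᶜ).Nonempty := by
    obtain ⟨p, hpS, hpA⟩ := hSA
    exact ⟨p, hpS, fun hpB => Set.eq_empty_iff_forall_notMem.1 hdisj p ⟨hpA, hpB⟩⟩
  have h2 : (S ∩ Aᶜ).Nonempty := by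
    obtain ⟨p, hpS, hpB⟩ := hSB
    exact ⟨p, hpS, fun hpA => Set.eq_empty_iff_forall_notMem.1 hdisj p ⟨hpA, hpB⟩⟩
  obtain ⟨p, hpS, hpB, hpA⟩ := hS Bᶜ Aᶜ hB.isOpen_compl hA.isOpen_compl hcov h1 h2
  rcases hSub hpS with h | h
  · exact hpA h
  · exact hpB h

end Helpers

section Main

open Topology Filter

variable {C : Type*} [ECCone C]

/-- Direction (ii) ⇒ (i), with the strengthening `ε x = w₁`. -/
theorem connected_implies_strong (ε : C → C) (hε : ∀ x, IsSuppIdem x (ε x))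
    (hconn : ∀ w : C, IsIdem w → IsConnected {x : C | x ≤ w})
    (w₁ w₂ : C) (h1 : IsIdem w₁) (h2 : IsIdem w₂) (hle : w₁ ≤ w₂) (hne : w₁ ≠ w₂)
    (hcr : CompactRelTo w₁ w₂) :
    ∃ x : C, w₁ ≤ x ∧ x ≤ w₂ ∧ ¬ IsIdem x ∧ ε x = w₁ := by
  classical
  set F : Set C := {u | IsIdem u ∧ u ≤ w₂ ∧ ¬ u ≤ w₁} with hF
  have hw2F : w₂ ∈ F := ⟨h2, le_rfl, fun h => hne (le_antisymm hle h)⟩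
  obtain ⟨v₀, hv₀F, hv₀min⟩ : ∃ v₀ ∈ F, ∀ u ∈ F, u ≤ v₀ → u = v₀ := by
    apply zorn_min_set
    intro c hc hchain
    rcases Set.eq_empty_or_nonempty c with rfl | hcne
    · exact ⟨w₂, hw2F, by simp⟩
    · obtain ⟨m, hglb, hmcl⟩ := exists_isGLB_mem_closure hcne (chain_directedOn_ge hchain)
      refine ⟨m, ⟨?_, ?_, ?_⟩, fun z hz => hglb.1 hz⟩
      · exact closure_minimal (fun y hy => (hc hy).1) isClosed_isIdem hmcl
      · obtain ⟨y, hy⟩ := hcne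
        exact (hglb.1 hy).trans (hc hy).2.1
      · intro hmw₁
        obtain ⟨u, huc, hule⟩ := hcr c hcne (fun u hu => (hc hu).1)
          (chain_directedOn_ge hchain) m hglb hmw₁
        have hinf : u ⊓ w₂ = u := inf_eq_left.2 (hc huc).2.1
        exact (hc huc).2.2 (hinf ▸ hule)
  have hv₀idem := hv₀F.1
  have hv₀w₂ := hv₀F.2.1
  have hv₀nw₁ := hv₀F.2.2
  set w₁' : C := w₁ ⊓ v₀ with hw₁'
  have hw₁'idem : IsIdem w₁' := h1.inf' hv₀idem
  have hw₁'v₀ : w₁' ≤ v₀ := inf_le_right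
  have hw₁'ne : w₁' ≠ v₀ := by
    intro h
    exact hv₀nw₁ (by rw [← h]; exact inf_le_left)
  have honly : ∀ u : C, IsIdem u → u ≤ v₀ → u ≠ v₀ → u ≤ w₁' := by
    intro u hu huv hune
    by_contra hcon
    have huw1 : ¬ u ≤ w₁ := fun h' => hcon (le_inf h' huv)
    exact hune (hv₀min u ⟨hu, huv.trans hv₀w₂, huw1⟩ huv)
  -- there is a non-idempotent in the interval `[w₁', v₀]`
  have hy : ∃ y : C, w₁' ≤ y ∧ y ≤ v₀ ∧ ¬ IsIdem y := by
    by_contra hall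
    push_neg at hall
    have hint : ∀ y : C, w₁' ≤ y → y ≤ v₀ → y = w₁' ∨ y = v₀ := by
      intro y hy1 hy2
      by_cases h : y = v₀
      · exact Or.inr h
      · exact Or.inl (le_antisymm (honly y (hall y hy1 hy2) hy2 h) hy1)
    refine not_preconnected_split (A := {x : C | x + w₁' = w₁'})
      (B := {x : C | x + w₁' = v₀}) (hconn v₀ hv₀idem).2 ?_ ?_ ?_ ?_ ?_ ?_
    · intro x hx
      have hx1 : w₁' ≤ x + w₁' := le_add_left' _ _
      have hx2 : x + w₁' ≤ v₀ := by
        have h3 := add_le_add' (hx : x ≤ v₀) hw₁'v₀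
        rwa [hv₀idem] at h3
      rcases hint _ hx1 hx2 with h | h
      · exact Or.inl h
      · exact Or.inr h
    · exact isClosed_eq (continuous_add_left' w₁') continuous_const
    · exact isClosed_eq (continuous_add_left' w₁') continuous_const
    · exact Set.eq_empty_iff_forall_notMem.2 fun x hx => hw₁'ne (hx.1.symm.trans hx.2)
    · exact ⟨0, zero_le' v₀, zero_add w₁'⟩
    · exact ⟨v₀, le_rfl, add_idem_of_le hw₁'idem hw₁'v₀⟩
  obtain ⟨y, hy1, hy2, hyni⟩ := hy
  -- the support idempotent of `y` is `w₁'`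
  obtain ⟨e, hesupp, heidem, heglb, hecl⟩ := exists_suppIdem y
  have hee : e = w₁' := by
    have he1 : w₁' ≤ e := hesupp.2 w₁' (add_idem_of_le hw₁'idem hy1)
    have he2 : e ≤ v₀ := hesupp.le_self.trans hy2
    have hene : e ≠ v₀ := by
      intro h
      have hyv : y = v₀ := le_antisymm hy2 (by rw [← h]; exact hesupp.le_self)
      exact hyni (by rw [hyv]; exact hv₀idem)
    exact le_antisymm (honly e heidem he2 hene) he1
  -- choose `t` so that `v₀ ≰ t·y + w₁`
  have hT : ∃ t : PosReal, ¬ v₀ ≤ psmul t y + w₁ := by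
    by_contra hall
    push_neg at hall
    have hZ : closure (orbit y) ⊆ {z : C | v₀ ≤ z + w₁} := by
      refine closure_minimal ?_ ((isClosed_const_le v₀).preimage (continuous_add_left' w₁))
      rintro _ ⟨t, rfl⟩
      exact hall t
    have hv₁ : v₀ ≤ w₁' + w₁ := hZ (by rw [hee] at hecl; exact hecl)
    have hw : w₁' + w₁ = w₁ := (le_idem_iff h1 w₁').1 inf_le_left
    exact hv₀nw₁ (hv₁.trans_eq hw)
  obtain ⟨t, ht⟩ := hT
  set x : C := psmul t y + w₁ with hxdef
  have hytv₀ : psmul t y ≤ v₀ := (psmul_le_psmul' t hy2).trans_eq (psmul_idem hv₀idem t)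
  have hw1x : w₁ ≤ x := le_add_left' _ _
  have hxw2 : x ≤ w₂ := by
    have h3 := add_le_add' (hytv₀.trans hv₀w₂) hle
    rwa [h2] at h3
  have hex := hε x
  have hεidem : IsIdem (ε x) := hex.isIdem
  have hw1ε : w₁ ≤ ε x := hex.2 w₁ (by rw [hxdef, add_assoc, h1])
  have hεx : ε x ≤ x := hex.le_self
  have hmeet : ε x ⊓ v₀ ≤ w₁ := by
    by_contra hcon
    have hmem : ε x ⊓ v₀ ∈ F := ⟨hεidem.inf' hv₀idem, inf_le_right.trans hv₀w₂, hcon⟩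
    have heqv := hv₀min _ hmem inf_le_right
    exact ht (((by rw [← heqv]; exact inf_le_left) : v₀ ≤ ε x).trans hεx)
  have hεle : ε x ≤ w₁ := by
    have hxle : x ≤ v₀ + w₁ := add_le_add_right' hytv₀ w₁
    have h7 : ε x = (ε x ⊓ v₀) + (ε x ⊓ w₁) := by
      rw [← idem_inf_add hεidem]
      exact (inf_eq_left.2 (hεx.trans hxle)).symm
    calc ε x = (ε x ⊓ v₀) + (ε x ⊓ w₁) := h7
    _ ≤ w₁ + w₁ := add_le_add' hmeet inf_le_right
    _ = w₁ := h1
  have hεeq : ε x = w₁ := le_antisymm hεle hw1ε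
  refine ⟨x, hw1x, hxw2, ?_, hεeq⟩
  intro hxidem
  have hxw1 : x = w₁ := (hex.eq_of_isIdem hxidem).symm.trans hεeq
  have h5 : psmul t y ≤ w₁' := le_inf ((le_add_right' _ _).trans_eq hxw1) hytv₀
  have h6 : w₁' ≤ psmul t y := by
    have h8 := psmul_le_psmul' t hy1
    rwa [psmul_idem hw₁'idem t] at h8
  have h7 : psmul t y = w₁' := le_antisymm h5 h6
  have h8 : y = w₁' := by
    have h9 := congrArg (psmul ⟨t.1⁻¹, inv_pos.2 t.2⟩) h7
    rwa [psmul_mul, show (⟨t.1⁻¹, inv_pos.2 t.2⟩ : PosReal) * t = 1 from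
      Subtype.ext (inv_mul_cancel₀ (ne_of_gt t.2)), one_psmul,
      psmul_idem hw₁'idem] at h9
  exact hyni (by rw [h8]; exact hw₁'idem)

/-- A clopen splitting of `{x : x ≤ w}` contradicts condition (i). -/
theorem no_split
    (hi : ∀ w₁ w₂ : C, IsIdem w₁ → IsIdem w₂ → w₁ ≤ w₂ → w₁ ≠ w₂ →
      CompactRelTo w₁ w₂ → ∃ x : C, w₁ ≤ x ∧ x ≤ w₂ ∧ ¬ IsIdem x)
    (w : C) (hw : IsIdem w) (A B : Set C)
    (hA : IsClosed A) (hB : IsClosed B) (hdisj : A ∩ B = ∅)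
    (hcover : {x : C | x ≤ w} ⊆ A ∪ B)
    (hAsub : A ⊆ {x : C | x ≤ w}) (hBsub : B ⊆ {x : C | x ≤ w})
    (h0 : (0 : C) ∈ A) (hBne : B.Nonempty) : False := by
  classical
  -- support idempotents of elements of `B` lie in `B`
  have hsuppB : ∀ x ∈ B, ∀ e : C, IsSuppIdem x e → e ∈ closure (orbit x) → e ∈ B := by
    intro x hx e hsupp hecl
    have hxw : x ≤ w := hBsub hx
    have hsub : closure (orbit x) ⊆ {y : C | y ≤ w} :=
      closure_minimal (orbit_subset_le hw hxw) (isClosed_le_const w)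
    have hsubAB : closure (orbit x) ⊆ A ∪ B := fun y hy => hcover (hsub hy)
    rcases hsubAB hecl with heA | heB
    · exact absurd (not_preconnected_split (isConnected_closure_orbit x).2 hsubAB hA hB hdisj
        ⟨e, hecl, heA⟩ ⟨x, subset_closure (mem_orbit_self x), hx⟩) not_false
    · exact heB
  -- minimal idempotent of `B`
  set EB : Set C := {v | IsIdem v ∧ v ∈ B} with hEB
  have hEBne : EB.Nonempty := by
    obtain ⟨x, hx⟩ := hBne
    obtain ⟨e, hsupp, heidem, _, hecl⟩ := exists_suppIdem x
    exact ⟨e, heidem, hsuppB x hx e hsupp hecl⟩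
  obtain ⟨w₂, hw₂EB, hw₂min⟩ : ∃ m ∈ EB, ∀ z ∈ EB, z ≤ m → z = m := by
    apply zorn_min_set
    intro c hc hchain
    rcases Set.eq_empty_or_nonempty c with rfl | hcne
    · obtain ⟨e, he⟩ := hEBne
      exact ⟨e, he, by simp⟩
    · obtain ⟨m, hglb, hmcl⟩ := exists_isGLB_mem_closure hcne (chain_directedOn_ge hchain)
      exact ⟨m, ⟨closure_minimal (fun y hy => (hc hy).1) isClosed_isIdem hmcl,
        closure_minimal (fun y hy => (hc hy).2) hB hmcl⟩, fun z hz => hglb.1 hz⟩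
  have hw₂idem := hw₂EB.1
  have hw₂B := hw₂EB.2
  have hw₂w : w₂ ≤ w := hBsub hw₂B
  -- maximal idempotent of `A` below `w₂`
  set T : Set C := {v | IsIdem v ∧ v ≤ w₂ ∧ v ∈ A} with hT
  have h0T : (0 : C) ∈ T := ⟨isIdem_zero, zero_le' w₂, h0⟩
  obtain ⟨w₁, hw₁T, hw₁max⟩ : ∃ m ∈ T, ∀ z ∈ T, m ≤ z → z = m := by
    apply zorn_max_set
    intro c hc hchain
    rcases Set.eq_empty_or_nonempty c with rfl | hcne
    · exact ⟨0, h0T, by simp⟩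
    · obtain ⟨m, hlub, hmcl⟩ := exists_isLUB_mem_closure hcne (chain_directedOn_le hchain)
      exact ⟨m, ⟨closure_minimal (fun y hy => (hc hy).1) isClosed_isIdem hmcl,
        closure_minimal (fun y hy => (hc hy).2.1) (isClosed_le_const w₂) hmcl,
        closure_minimal (fun y hy => (hc hy).2.2) hA hmcl⟩, fun z hz => hlub.1 hz⟩
  have hw₁idem := hw₁T.1
  have hw₁w₂ := hw₁T.2.1
  have hw₁A := hw₁T.2.2
  have hne12 : w₁ ≠ w₂ := fun h =>
    Set.eq_empty_iff_forall_notMem.1 hdisj w₁ ⟨hw₁A, h ▸ hw₂B⟩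
  -- `w₁` is compact relative to `w₂`
  have hcr : CompactRelTo w₁ w₂ := by
    intro D hDne hDidem hDdir m hglb hmw₁
    by_contra hno
    push_neg at hno
    have hconst : ∀ u ∈ D, (u ⊓ w₂) + w₁ = w₂ := by
      intro u hu
      have heid : IsIdem ((u ⊓ w₂) + w₁) := ((hDidem u hu).inf' hw₂idem).add' hw₁idem
      have he1 : w₁ ≤ (u ⊓ w₂) + w₁ := le_add_left' _ _
      have he2 : (u ⊓ w₂) + w₁ ≤ w₂ := by
        have h3 := add_le_add' (inf_le_right : u ⊓ w₂ ≤ w₂) hw₁w₂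
        rwa [hw₂idem] at h3
      rcases hcover (he2.trans hw₂w) with hA' | hB'
      · have h4 := hw₁max _ ⟨heid, he2, hA'⟩ he1
        exact absurd ((le_add_right' (u ⊓ w₂) w₁).trans h4.le) (hno u hu)
      · exact hw₂min _ ⟨heid, hB'⟩ he2
    set D' : Set C := (fun u => u ⊓ w₂) '' D with hD'
    have hD'ne : D'.Nonempty := hDne.image _
    have hD'dir : DirectedOn (· ≥ ·) D' := by
      rintro _ ⟨u, hu, rfl⟩ _ ⟨v, hv, rfl⟩
      obtain ⟨z, hz, hzu, hzv⟩ := hDdir u hu v hv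
      exact ⟨z ⊓ w₂, ⟨z, hz, rfl⟩, inf_le_inf_right w₂ hzu, inf_le_inf_right w₂ hzv⟩
    obtain ⟨m', hm'glb, hm'cl⟩ := exists_isGLB_mem_closure hD'ne hD'dir
    have hglb2 : IsGLB D' (m ⊓ w₂) := by
      constructor
      · rintro _ ⟨u, hu, rfl⟩
        exact inf_le_inf_right w₂ (hglb.1 hu)
      · intro c hc
        refine le_inf (hglb.2 fun u hu => (hc ⟨u, hu, rfl⟩).trans inf_le_left) ?_
        obtain ⟨u, hu⟩ := hDne
        exact (hc ⟨u, hu, rfl⟩).trans inf_le_right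
    have hm'eq : m' = m ⊓ w₂ := hm'glb.unique hglb2
    have hsum : m' + w₁ = w₂ := by
      have hsub : closure D' ⊆ {z : C | z + w₁ = w₂} := by
        refine closure_minimal ?_ (isClosed_eq (continuous_add_left' w₁) continuous_const)
        rintro _ ⟨u, hu, rfl⟩
        exact hconst u hu
      exact hsub hm'cl
    have hle21 : w₂ ≤ w₁ := by
      rw [← hsum, hm'eq]
      have hle' : m ⊓ w₂ ≤ w₁ := inf_le_left.trans hmw₁
      calc (m ⊓ w₂) + w₁ ≤ w₁ + w₁ := add_le_add_right' hle' w₁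
      _ = w₁ := hw₁idem
    exact hne12 (le_antisymm hw₁w₂ hle21)
  -- apply (i) and derive a contradiction
  obtain ⟨x, hw₁x, hxw₂, hxni⟩ := hi w₁ w₂ hw₁idem hw₂idem hw₁w₂ hne12 hcr
  obtain ⟨e, hsupp, heidem, _, hecl⟩ := exists_suppIdem x
  have hsubw₂ : closure (orbit x) ⊆ {y : C | y ≤ w₂} :=
    closure_minimal (orbit_subset_le hw₂idem hxw₂) (isClosed_le_const w₂)
  have hsubAB : closure (orbit x) ⊆ A ∪ B := fun y hy => hcover ((hsubw₂ hy).trans hw₂w)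
  have hex : e ≤ x := hsupp.le_self
  have heA : e ∈ A := by
    rcases hsubAB hecl with h | h
    · exact h
    · exfalso
      have h4 := hw₂min e ⟨heidem, h⟩ (hsubw₂ hecl)
      have hw2x : w₂ ≤ x := by rw [← h4]; exact hex
      have hxeq : x = w₂ := le_antisymm hxw₂ hw2x
      exact hxni (by rw [hxeq]; exact hw₂idem)
  obtain ⟨u, huidem, hxu, hulub, hucl⟩ := exists_idem_above x
  have huw₂ : u ≤ w₂ := hsubw₂ hucl
  have huB : u ∈ B := by
    rcases hsubAB hucl with h | h
    · exfalso
      have h4 := hw₁max u ⟨huidem, huw₂, h⟩ (hw₁x.trans hxu)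
      have hxw₁ : x = w₁ := le_antisymm (by rw [← h4]; exact hxu) hw₁x
      exact hxni (by rw [hxw₁]; exact hw₁idem)
    · exact h
  exact not_preconnected_split (isConnected_closure_orbit x).2 hsubAB hA hB hdisj
    ⟨e, hecl, heA⟩ ⟨u, hucl, huB⟩

/-- Direction (i) ⇒ (ii). -/
theorem gap_implies_connected
    (hi : ∀ w₁ w₂ : C, IsIdem w₁ → IsIdem w₂ → w₁ ≤ w₂ → w₁ ≠ w₂ →
      CompactRelTo w₁ w₂ → ∃ x : C, w₁ ≤ x ∧ x ≤ w₂ ∧ ¬ IsIdem x) :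
    ∀ w : C, IsIdem w → IsConnected {x : C | x ≤ w} := by
  intro w hw
  refine ⟨⟨0, zero_le' w⟩, ?_⟩
  by_contra hnc
  simp only [IsPreconnected] at hnc
  push_neg at hnc
  obtain ⟨U, V, hU, hV, hcov, hUne, hVne, hempty⟩ := hnc
  set K : Set C := {x : C | x ≤ w} with hK
  set A : Set C := K ∩ Vᶜ with hAdef
  set B : Set C := K ∩ Uᶜ with hBdef
  have hKclosed : IsClosed K := isClosed_le_const w
  have hAcl : IsClosed A := hKclosed.inter hV.isClosed_compl
  have hBcl : IsClosed B := hKclosed.inter hU.isClosed_compl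
  have hdisj : A ∩ B = ∅ := by
    rw [Set.eq_empty_iff_forall_notMem]
    rintro x ⟨⟨hxK, hxV⟩, _, hxU⟩
    rcases hcov hxK with h | h
    exacts [hxU h, hxV h]
  have hcover : K ⊆ A ∪ B := by
    intro x hx
    rcases hcov hx with h | h
    · exact Or.inl ⟨hx, fun hv => Set.eq_empty_iff_forall_notMem.1 hempty x ⟨hx, h, hv⟩⟩
    · exact Or.inr ⟨hx, fun hu => Set.eq_empty_iff_forall_notMem.1 hempty x ⟨hx, hu, h⟩⟩
  have hAne : A.Nonempty := by
    obtain ⟨p, hpK, hpU⟩ := hUne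
    exact ⟨p, hpK, fun hv => Set.eq_empty_iff_forall_notMem.1 hempty p ⟨hpK, hpU, hv⟩⟩
  have hBne : B.Nonempty := by
    obtain ⟨p, hpK, hpV⟩ := hVne
    exact ⟨p, hpK, fun hu => Set.eq_empty_iff_forall_notMem.1 hempty p ⟨hpK, hu, hpV⟩⟩
  have h0K : (0 : C) ∈ K := zero_le' w
  rcases hcover h0K with h0 | h0
  · exact no_split hi w hw A B hAcl hBcl hdisj hcover Set.inter_subset_left
      Set.inter_subset_left h0 hBne
  · exact no_split hi w hw B A hBcl hAcl (by rw [Set.inter_comm]; exact hdisj)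
      (by rw [Set.union_comm]; exact hcover) Set.inter_subset_left
      Set.inter_subset_left h0 hAne

end Main

end ECCone

/-- In an extended Choquet cone the following are equivalent:
(i) between any two distinct comparable idempotents `w₁ ≤ w₂` with `w₁` compact relative
to `w₂` there is a non-idempotent element; (ii) `{x : x ≤ w}` is connected for every
idempotent `w`. Moreover, in that case the element in (i) can be chosen with `ε(x) = w₁`. -/
theorem stmt_5 {C : Type*} [ECCone C] (ε : C → C) (hε : ∀ x, ECCone.IsSuppIdem x (ε x)) :
    ((∀ w₁ w₂ : C, ECCone.IsIdem w₁ → ECCone.IsIdem w₂ → w₁ ≤ w₂ → w₁ ≠ w₂ →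
        ECCone.CompactRelTo w₁ w₂ → ∃ x : C, w₁ ≤ x ∧ x ≤ w₂ ∧ ¬ ECCone.IsIdem x) ↔
      (∀ w : C, ECCone.IsIdem w → IsConnected {x : C | x ≤ w})) ∧
    ((∀ w : C, ECCone.IsIdem w → IsConnected {x : C | x ≤ w}) →
      ∀ w₁ w₂ : C, ECCone.IsIdem w₁ → ECCone.IsIdem w₂ → w₁ ≤ w₂ → w₁ ≠ w₂ →
        ECCone.CompactRelTo w₁ w₂ →
          ∃ x : C, w₁ ≤ x ∧ x ≤ w₂ ∧ ¬ ECCone.IsIdem x ∧ ε x = w₁) := by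
  constructor
  · constructor
    · exact fun hi => ECCone.gap_implies_connected hi
    · intro hconn w₁ w₂ h1 h2 hle hne hcr
      obtain ⟨x, ha, hb, hc, _⟩ :=
        ECCone.connected_implies_strong ε hε hconn w₁ w₂ h1 h2 hle hne hcr
      exact ⟨x, ha, hb, hc⟩
  · exact fun hconn w₁ w₂ h1 h2 hle hne hcr =>
      ECCone.connected_implies_strong ε hε hconn w₁ w₂ h1 h2 hle hne hcr
end

section
/- Let I be an upward directed set, let (n_i)_{i∈I} be natural numbers, and for all i, j ∈ I with j ≤ i let φ_{i,j} : [0,∞]^{n_i} → [0,∞]^{n_j} be continuous linear maps such that φ_{i,i} = id and φ_{j,k} ∘ φ_{i,j} = φ_{i,k} whenever k ≤ j ≤ i. Let C = {(x_i)_i ∈ ∏_{i∈I} [0,∞]^{n_i} : φ_{i,j}(x_i) = x_j for all j ≤ i} with coordinatewise operations and the topology induced from the product topology (so that C is the projective limit of the system). Then C is strongly connected and has an abundance of compact idempotents. -/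
open scoped ENNReal NNReal

attribute [local instance] Classical.propDecidable

instance : ConnectedSpace ℝ≥0∞ :=
  { isPreconnected_univ := by rw [← Set.Icc_bot_top]; exact isPreconnected_Icc
    toNonempty := inferInstance }

/-- The projective limit type. -/
abbrev PLlim {ι : Type*} [Preorder ι] (n : ι → ℕ)
    (φ : ∀ i j, j ≤ i → (Fin (n i) → ℝ≥0∞) → (Fin (n j) → ℝ≥0∞)) : Type _ :=
  {x : ∀ i, Fin (n i) → ℝ≥0∞ // ∀ i j (h : j ≤ i), φ i j h (x i) = x j}

section AuxStmt6

variable {ι : Type*} [Preorder ι] {n : ι → ℕ}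
  {φ : ∀ i j, j ≤ i → (Fin (n i) → ℝ≥0∞) → (Fin (n j) → ℝ≥0∞)}

theorem aux_abundant (inst : ECCone (PLlim n φ))
    (h_zero : (ECCone.zeroOf inst).1 = fun _ _ => 0)
    (h_add : ∀ x y : PLlim n φ,
      (ECCone.addOf inst x y).1 = fun i k => x.1 i k + y.1 i k) :
    @ECCone.HasAbundantCompactIdem _ inst := by
  letI := inst
  have hadd : ∀ x y : PLlim n φ, (x + y).1 = fun i k => x.1 i k + y.1 i k := h_add
  have hzero : (0 : PLlim n φ).1 = fun _ _ => 0 := h_zero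
  have hle := inst.le_iff_exists_add
  have haddc : ∀ (x y : PLlim n φ) (i) (k), (x + y).1 i k = x.1 i k + y.1 i k := by
    intro x y i k; rw [hadd]
  have hlec : ∀ x y : PLlim n φ, (∃ z, x + z = y) → ∀ i k, x.1 i k ≤ y.1 i k := by
    rintro x y ⟨z, hz⟩ i k
    have h1 : (x + z).1 i k = y.1 i k := by rw [hz]
    rw [haddc] at h1
    exact h1 ▸ le_self_add
  have hlec0 : ∀ x y : PLlim n φ, (∃ z, x + z = y) → ∀ i k, y.1 i k = 0 → x.1 i k = 0 := by
    intro x y hxy i k h0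
    have h1 := hlec x y hxy i k
    rw [h0] at h1
    exact le_antisymm h1 zero_le
  have hidemc : ∀ v : PLlim n φ, v + v = v → ∀ i k, v.1 i k = 0 ∨ v.1 i k = ⊤ := by
    intro v hv i k
    have h1 : v.1 i k + v.1 i k = v.1 i k := by rw [← haddc, hv]
    rcases eq_or_ne (v.1 i k) ⊤ with h2 | h2
    · exact Or.inr h2
    · exact Or.inl ((ENNReal.add_right_inj h2).mp (by rw [h1, add_zero]))
  have hcoord_le : ∀ w x : PLlim n φ, w + w = w →
      (∀ i k, w.1 i k = 0 → x.1 i k = 0) → x + w = w := by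
    intro w x hw hx
    apply Subtype.ext
    rw [hadd]
    funext i k
    rcases hidemc w hw i k with h0 | ht
    · rw [h0, hx i k h0, add_zero]
    · rw [ht, add_top]
  intro w hw
  have hw' : w + w = w := hw
  set E : ι → Set (PLlim n φ) :=
    fun i => {v | v + v = v ∧ ∀ k, w.1 i k = 0 → v.1 i k = 0} with hE
  have hE0 : ∀ i, (0 : PLlim n φ) ∈ E i := by
    intro i
    refine ⟨add_zero 0, fun k _ => ?_⟩
    rw [hzero]
  have hEadd : ∀ i, ∀ v ∈ E i, ∀ v' ∈ E i, v + v' ∈ E i := by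
    intro i v hv v' hv'
    refine ⟨?_, fun k h0 => ?_⟩
    · rw [add_add_add_comm, hv.1, hv'.1]
    · rw [haddc, hv.2 k h0, hv'.2 k h0, add_zero]
  have hEsum : ∀ i (l : List (PLlim n φ)), (∀ v ∈ l, v ∈ E i) → l.sum ∈ E i := by
    intro i l
    induction l with
    | nil => intro _; simpa using hE0 i
    | cons a t ih =>
      intro hmem
      rw [List.sum_cons]
      exact hEadd i a (hmem a List.mem_cons_self) t.sum
        (ih fun v hv => hmem v (List.mem_cons_of_mem a hv))
  have hsumc : ∀ (l : List (PLlim n φ)) (j) (k),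
      (l.sum).1 j k = (l.map (fun v => v.1 j k)).sum := by
    intro l j k
    induction l with
    | nil => simp [hzero]
    | cons a t ih => rw [List.sum_cons, haddc, List.map_cons, List.sum_cons, ih]
  have hUc : ∀ (i i' j' : ι) (h : j' ≤ i'),
      φ i' j' h (fun k => if ∃ v ∈ E i, v.1 i' k ≠ 0 then (⊤ : ℝ≥0∞) else 0)
        = fun k => if ∃ v ∈ E i, v.1 j' k ≠ 0 then (⊤ : ℝ≥0∞) else 0 := by
    intro i i' j' h
    set p : Fin (n i') → PLlim n φ :=
      fun k => if hx : ∃ v ∈ E i, v.1 i' k ≠ 0 then hx.choose else 0 with hp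
    set q : Fin (n j') → PLlim n φ :=
      fun k => if hx : ∃ v ∈ E i, v.1 j' k ≠ 0 then hx.choose else 0 with hq
    set V : PLlim n φ := (List.ofFn p).sum + (List.ofFn q).sum with hV
    have hpE : ∀ k, p k ∈ E i := by
      intro k; rw [hp]; dsimp only
      split
      · next hx => exact hx.choose_spec.1
      · exact hE0 i
    have hqE : ∀ k, q k ∈ E i := by
      intro k; rw [hq]; dsimp only
      split
      · next hx => exact hx.choose_spec.1
      · exact hE0 i
    have hVE : V ∈ E i := by
      refine hEadd i _ (hEsum i _ ?_) _ (hEsum i _ ?_)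
      · intro v hv
        obtain ⟨k, rfl⟩ := List.mem_ofFn.1 hv
        exact hpE k
      · intro v hv
        obtain ⟨k, rfl⟩ := List.mem_ofFn.1 hv
        exact hqE k
    have hstage : ∀ (j : ι) (r : Fin (n j) → PLlim n φ), (∀ k, r k ∈ E i) →
        (∀ k, (∃ v ∈ E i, v.1 j k ≠ 0) → (r k).1 j k ≠ 0) →
        (∀ k, (List.ofFn r).sum.1 j k ≤ V.1 j k) →
        V.1 j = fun k => if ∃ v ∈ E i, v.1 j k ≠ 0 then (⊤ : ℝ≥0∞) else 0 := by
      intro j r hrE hrne hrle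
      funext k
      by_cases hx : ∃ v ∈ E i, v.1 j k ≠ 0
      · rw [if_pos hx]
        have h1 : (r k).1 j k ≠ 0 := hrne k hx
        have h2 : (r k).1 j k ≤ V.1 j k := by
          refine le_trans ?_ (hrle k)
          rw [hsumc]
          refine List.single_le_sum (fun x _ => zero_le) _ ?_
          exact List.mem_map_of_mem (List.mem_ofFn.2 ⟨k, rfl⟩)
        rcases hidemc V hVE.1 j k with h0 | ht
        · rw [h0] at h2
          exact absurd (le_antisymm h2 zero_le) h1
        · exact ht
      · rw [if_neg hx]
        push_neg at hx
        exact hx V hVE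
    have hVi' : V.1 i' = fun k => if ∃ v ∈ E i, v.1 i' k ≠ 0 then (⊤ : ℝ≥0∞) else 0 := by
      refine hstage i' p hpE ?_ ?_
      · intro k hx
        rw [hp]; dsimp only; rw [dif_pos hx]
        exact hx.choose_spec.2
      · intro k
        rw [hV, haddc]
        exact le_self_add
    have hVj' : V.1 j' = fun k => if ∃ v ∈ E i, v.1 j' k ≠ 0 then (⊤ : ℝ≥0∞) else 0 := by
      refine hstage j' q hqE ?_ ?_
      · intro k hx
        rw [hq]; dsimp only; rw [dif_pos hx]
        exact hx.choose_spec.2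
      · intro k
        rw [hV, haddc]
        exact le_add_self
    rw [← hVi', ← hVj']
    exact V.2 i' j' h
  set u : ι → PLlim n φ :=
    fun i => ⟨fun j k => if ∃ v ∈ E i, v.1 j k ≠ 0 then (⊤ : ℝ≥0∞) else 0,
      fun i' j' h => hUc i i' j' h⟩ with hu
  have huc : ∀ i j k, (u i).1 j k = if ∃ v ∈ E i, v.1 j k ≠ 0 then (⊤ : ℝ≥0∞) else 0 :=
    fun _ _ _ => rfl
  have hui : ∀ i, u i + u i = u i := by
    intro i
    apply Subtype.ext
    rw [hadd]
    funext j k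
    show (u i).1 j k + (u i).1 j k = (u i).1 j k
    rw [huc]
    split
    · simp
    · simp
  have hEleu : ∀ i, ∀ v ∈ E i, v + u i = u i := by
    intro i v hv
    apply Subtype.ext
    rw [hadd]
    funext j k
    show v.1 j k + (u i).1 j k = (u i).1 j k
    rw [huc]
    by_cases hx : ∃ v' ∈ E i, v'.1 j k ≠ 0
    · rw [if_pos hx, add_top]
    · rw [if_neg hx]
      push_neg at hx
      rw [hx v hv, add_zero]
  have hwE : ∀ i, w ∈ E i := fun i => ⟨hw', fun k h0 => h0⟩
  have huE : ∀ i, u i ∈ E i := by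
    intro i
    refine ⟨hui i, fun k h0 => ?_⟩
    rw [huc, if_neg]
    rintro ⟨v, hv, hne⟩
    exact hne (hv.2 k h0)
  have hmin : ∀ (D : Set (PLlim n φ)), D.Nonempty →
      (∀ v ∈ D, ∀ v' ∈ D, ∃ v'' ∈ D, (∃ a, v'' + a = v) ∧ (∃ a, v'' + a = v')) →
      ∀ j : ι, ∃ v ∈ D, ∀ v' ∈ D, ∀ k, v.1 j k ≠ 0 → v'.1 j k ≠ 0 := by
    rintro D ⟨v₀, hv₀⟩ hDd j
    set card : PLlim n φ → ℕ := fun v => (Finset.univ.filter fun k => v.1 j k ≠ 0).card with hcard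
    set N : Set ℕ := card '' D with hN
    have hNne : N.Nonempty := ⟨card v₀, ⟨v₀, hv₀, rfl⟩⟩
    obtain ⟨v, hvD, hvc⟩ : ∃ v ∈ D, card v = sInf N := Nat.sInf_mem hNne
    refine ⟨v, hvD, ?_⟩
    intro v' hv' k hk
    obtain ⟨v'', hv''D, h1, h2⟩ := hDd v hvD v' hv'
    have hsub : (Finset.univ.filter fun k' => v''.1 j k' ≠ 0)
        ⊆ (Finset.univ.filter fun k' => v.1 j k' ≠ 0) := by
      intro k' hk'
      simp only [Finset.mem_filter, Finset.mem_univ, true_and] at hk' ⊢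
      intro h0
      exact hk' (hlec0 v'' v h1 j k' h0)
    have hcardle : card v ≤ card v'' := by
      rw [hvc]
      exact Nat.sInf_le ⟨v'', hv''D, rfl⟩
    have heq := Finset.eq_of_subset_of_card_le hsub hcardle
    have hk'' : v''.1 j k ≠ 0 := by
      have hmem : k ∈ Finset.univ.filter fun k' => v.1 j k' ≠ 0 := by
        simp only [Finset.mem_filter, Finset.mem_univ, true_and]
        exact hk
      rw [← heq] at hmem
      simpa using hmem
    intro h0
    exact hk'' (hlec0 v'' v' h2 j k h0)
  have hucomp : ∀ i, @ECCone.IsCompactIdem _ inst (u i) := by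
    intro i
    refine ⟨hui i, ?_⟩
    intro D hDne hDi hDd m hglb hm
    have hDd' : ∀ v ∈ D, ∀ v' ∈ D, ∃ v'' ∈ D, (∃ a, v'' + a = v) ∧ (∃ a, v'' + a = v') := by
      intro v hv v' hv'
      obtain ⟨v'', hv''D, h1, h2⟩ := hDd v hv v' hv'
      exact ⟨v'', hv''D, (hle v'' v).1 h1, (hle v'' v').1 h2⟩
    choose vm hvmD hvmP using hmin D hDne hDd'
    have hcompat : ∀ i' j' (h : j' ≤ i'), φ i' j' h ((vm i').1 i') = (vm j').1 j' := by
      intro i' j' h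
      obtain ⟨v'', hv''D, h1, h2⟩ := hDd' _ (hvmD i') _ (hvmD j')
      have he : ∀ (a : ι), (∃ b, v'' + b = vm a) → v''.1 a = (vm a).1 a := by
        intro a hle'
        funext k
        rcases eq_or_ne ((vm a).1 a k) 0 with h0 | hne
        · rw [h0]
          exact hlec0 v'' (vm a) hle' a k h0
        · have hvv : v''.1 a k ≠ 0 := hvmP a v'' hv''D k hne
          have ht1 : v''.1 a k = ⊤ := (hidemc v'' (hDi _ hv''D) a k).resolve_left hvv
          have ht2 : (vm a).1 a k = ⊤ := (hidemc (vm a) (hDi _ (hvmD a)) a k).resolve_left hne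
          rw [ht1, ht2]
      rw [← he i' h1, ← he j' h2, v''.2 i' j' h]
    set z : PLlim n φ := ⟨fun j => (vm j).1 j, hcompat⟩ with hz
    have hzm := hglb.2 (fun v hv => (hle z v).2 ⟨v, by
      apply Subtype.ext
      rw [hadd]
      funext j k
      show (vm j).1 j k + v.1 j k = v.1 j k
      rcases eq_or_ne ((vm j).1 j k) 0 with h0 | hne
      · rw [h0, zero_add]
      · have hvne := hvmP j v hv k hne
        have ht : v.1 j k = ⊤ := (hidemc v (hDi v hv) j k).resolve_left hvne
        rw [ht, add_top]⟩)
    refine ⟨vm i, hvmD i, (hle (vm i) (u i)).2 ⟨u i, hEleu i (vm i) ⟨hDi _ (hvmD i), ?_⟩⟩⟩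
    intro k h0
    by_contra hne
    have h1 : z.1 i k = 0 := by
      refine hlec0 z (u i) ?_ i k ((huE i).2 k h0)
      obtain ⟨a, ha⟩ := (hle z m).1 hzm
      obtain ⟨b, hb⟩ := (hle m (u i)).1 hm
      exact ⟨a + b, by rw [← add_assoc, ha, hb]⟩
    exact hne h1
  refine ⟨Set.range u, ?_, ?_, ?_⟩
  · rintro v ⟨i, rfl⟩
    exact hucomp i
  · rintro v ⟨i, rfl⟩
    exact (hle w (u i)).2 ⟨u i, hEleu i w (hwE i)⟩
  · intro zz hzz
    refine (hle zz w).2 ⟨w, hcoord_le w zz hw' ?_⟩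
    intro i k h0
    exact hlec0 zz (u i) ((hle zz (u i)).1 (hzz ⟨i, rfl⟩)) i k ((huE i).2 k h0)

theorem aux_conn [IsDirected ι (· ≤ ·)]
    (φ_cont : ∀ i j (h : j ≤ i), Continuous (φ i j h))
    (φ_add : ∀ i j (h : j ≤ i) (x y : Fin (n i) → ℝ≥0∞),
      φ i j h (x + y) = φ i j h x + φ i j h y)
    (φ_id : ∀ i (h : i ≤ i) (x : Fin (n i) → ℝ≥0∞), φ i i h x = x)
    (φ_comp : ∀ i j k (hij : j ≤ i) (hjk : k ≤ j) (x : Fin (n i) → ℝ≥0∞),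
      φ j k hjk (φ i j hij x) = φ i k (hjk.trans hij) x)
    (inst : ECCone (PLlim n φ))
    (h_top : inst.toTopologicalSpace = instTopologicalSpaceSubtype)
    (h_zero : (ECCone.zeroOf inst).1 = fun _ _ => 0)
    (h_add : ∀ x y : PLlim n φ,
      (ECCone.addOf inst x y).1 = fun i k => x.1 i k + y.1 i k) :
    @ECCone.StronglyConnected _ inst := by
  letI := inst
  have hadd : ∀ x y : PLlim n φ, (x + y).1 = fun i k => x.1 i k + y.1 i k := h_add
  have hle := inst.le_iff_exists_add
  have haddc : ∀ (x y : PLlim n φ) (i) (k), (x + y).1 i k = x.1 i k + y.1 i k := by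
    intro x y i k; rw [hadd]
  have hlec : ∀ x y : PLlim n φ, (∃ z, x + z = y) → ∀ i k, x.1 i k ≤ y.1 i k := by
    rintro x y ⟨z, hz⟩ i k
    have h1 : (x + z).1 i k = y.1 i k := by rw [hz]
    rw [haddc] at h1
    exact h1 ▸ le_self_add
  have hlec0 : ∀ x y : PLlim n φ, (∃ z, x + z = y) → ∀ i k, y.1 i k = 0 → x.1 i k = 0 := by
    intro x y hxy i k h0
    have h1 := hlec x y hxy i k
    rw [h0] at h1
    exact le_antisymm h1 zero_le
  have hidemc : ∀ v : PLlim n φ, v + v = v → ∀ i k, v.1 i k = 0 ∨ v.1 i k = ⊤ := by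
    intro v hv i k
    have h1 : v.1 i k + v.1 i k = v.1 i k := by rw [← haddc, hv]
    rcases eq_or_ne (v.1 i k) ⊤ with h2 | h2
    · exact Or.inr h2
    · exact Or.inl ((ENNReal.add_right_inj h2).mp (by rw [h1, add_zero]))
  have hcoord_le : ∀ w x : PLlim n φ, w + w = w →
      (∀ i k, w.1 i k = 0 → x.1 i k = 0) → x + w = w := by
    intro w x hw hx
    apply Subtype.ext
    rw [hadd]
    funext i k
    rcases hidemc w hw i k with h0 | ht
    · rw [h0, hx i k h0, add_zero]
    · rw [ht, add_top]
  intro w hw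
  have hw' : w + w = w := hw
  rw [h_top]
  rcases isEmpty_or_nonempty ι with hι | hι
  · refine ⟨⟨w, (hle w w).2 ⟨0, add_zero w⟩⟩, ?_⟩
    apply Set.Subsingleton.isPreconnected
    intro a _ b _
    apply Subtype.ext
    funext i
    exact hι.elim i
  have hidw : ∀ j k, w.1 j k = 0 ∨ w.1 j k = ⊤ := hidemc w hw'
  set B : Set (∀ i, Fin (n i) → ℝ≥0∞) := {x | ∀ j k, w.1 j k = 0 → x j k = 0} with hB
  set Sf : ι → Set (∀ i, Fin (n i) → ℝ≥0∞) := fun i =>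
    B ∩ ⋂ j, ⋂ (_ : j ≤ i), {x | φ i j _ (x i) = x j} with hSf
  have hBclosed : IsClosed B := by
    have hBeq : B = ⋂ (j) (k) (_ : w.1 j k = 0), {x : ∀ i, Fin (n i) → ℝ≥0∞ | x j k = 0} := by
      ext x
      simp only [hB, Set.mem_setOf_eq, Set.mem_iInter]
    rw [hBeq]
    exact isClosed_iInter fun j => isClosed_iInter fun k => isClosed_iInter fun _ =>
      isClosed_eq ((continuous_apply k).comp (continuous_apply j)) continuous_const
  have hSfclosed : ∀ i, IsClosed (Sf i) :=
    fun i => hBclosed.inter (isClosed_iInter fun j => isClosed_iInter fun h =>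
      isClosed_eq ((φ_cont i j h).comp (continuous_apply i)) (continuous_apply j))
  have hSfcpt : ∀ i, IsCompact (Sf i) := fun i => (hSfclosed i).isCompact
  have hwSf : ∀ i, w.1 ∈ Sf i := fun i =>
    ⟨fun j k h0 => h0, Set.mem_iInter.2 fun j => Set.mem_iInter.2 fun h => w.2 i j h⟩
  have hSfconn : ∀ i, IsPreconnected (Sf i) := by
    intro i
    set tr : ∀ j, (Fin (n j) → ℝ≥0∞) → (Fin (n j) → ℝ≥0∞) :=
      fun j a k => if w.1 j k = 0 then 0 else a k with htr
    have htr0 : ∀ j a k, w.1 j k = 0 → tr j a k = 0 := fun j a k h0 => if_pos h0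
    have htr_of : ∀ j (a : Fin (n j) → ℝ≥0∞), (∀ k, w.1 j k = 0 → a k = 0) → tr j a = a := by
      intro j a ha
      funext k
      by_cases h0 : w.1 j k = 0
      · rw [htr0 j a k h0, ha k h0]
      · simp only [htr]
        rw [if_neg h0]
    have hkey : ∀ (j : ι) (h : j ≤ i) (a : Fin (n i) → ℝ≥0∞), (∀ k, w.1 i k = 0 → a k = 0) →
        ∀ k, w.1 j k = 0 → φ i j h a k = 0 := by
      intro j h a ha k hk
      have hsum : a + w.1 i = w.1 i := funext fun k' => by
        rcases hidw i k' with h0 | ht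
        · show a k' + w.1 i k' = w.1 i k'
          rw [h0, ha k' h0, add_zero]
        · show a k' + w.1 i k' = w.1 i k'
          rw [ht, add_top]
      have h2 : φ i j h a + φ i j h (w.1 i) = w.1 j := by
        rw [← φ_add i j h a (w.1 i), hsum, w.2 i j h]
      have h3 := congrFun h2 k
      simp only [Pi.add_apply] at h3
      rw [w.2 i j h] at h3
      rw [hk, add_zero] at h3
      exact h3
    set Ψ : (∀ i', Fin (n i') → ℝ≥0∞) → (∀ i', Fin (n i') → ℝ≥0∞) := fun y j =>
      if h : j ≤ i then φ i j h (tr i (y i)) else tr j (y j) with hΨ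
    have htrcont : ∀ j, Continuous (tr j) := by
      intro j
      apply continuous_pi
      intro k
      by_cases h0 : w.1 j k = 0
      · simpa [htr, h0] using (continuous_const : Continuous fun _ : Fin (n j) → ℝ≥0∞ => (0 : ℝ≥0∞))
      · simpa [htr, h0] using continuous_apply k
    have hΨcont : Continuous Ψ := by
      apply continuous_pi
      intro j
      by_cases h : j ≤ i
      · simp only [hΨ, dif_pos h]
        exact (φ_cont i j h).comp ((htrcont i).comp (continuous_apply i))
      · simp only [hΨ, dif_neg h]
        exact (htrcont j).comp (continuous_apply j)
    have hrange : Sf i = Set.range Ψ := by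
      ext x
      constructor
      · rintro ⟨hx1, hx2⟩
        simp only [Set.mem_iInter, Set.mem_setOf_eq] at hx2
        refine ⟨x, ?_⟩
        funext j
        by_cases h : j ≤ i
        · simp only [hΨ, dif_pos h]
          rw [htr_of i (x i) (fun k => hx1 i k)]
          exact hx2 j h
        · simp only [hΨ, dif_neg h]
          exact htr_of j (x j) (fun k => hx1 j k)
      · rintro ⟨y, rfl⟩
        refine ⟨?_, ?_⟩
        · intro j k h0
          by_cases h : j ≤ i
          · show Ψ y j k = 0
            simp only [hΨ, dif_pos h]
            exact hkey j h (tr i (y i)) (fun k' => htr0 i (y i) k') k h0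
          · show Ψ y j k = 0
            simp only [hΨ, dif_neg h]
            exact htr0 j (y j) k h0
        · simp only [Set.mem_iInter, Set.mem_setOf_eq]
          intro j h
          have hi : Ψ y i = tr i (y i) := by
            simp only [hΨ, dif_pos (le_refl i)]
            rw [φ_id]
          show φ i j h (Ψ y i) = Ψ y j
          rw [hi]
          simp only [hΨ, dif_pos h]
    rw [hrange]
    exact isPreconnected_range hΨcont
  have hdirSf : ∀ i i', ∃ i'', Sf i'' ⊆ Sf i ∧ Sf i'' ⊆ Sf i' := by
    intro i i'
    obtain ⟨i'', hi, hi'⟩ := exists_ge_ge i i'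
    have hsub : ∀ i₀, i₀ ≤ i'' → Sf i'' ⊆ Sf i₀ := by
      intro i₀ h0 x hx
      obtain ⟨hx1, hx2⟩ := hx
      simp only [Set.mem_iInter, Set.mem_setOf_eq] at hx2
      refine ⟨hx1, ?_⟩
      simp only [Set.mem_iInter, Set.mem_setOf_eq]
      intro j h
      have e1 : x i₀ = φ i'' i₀ h0 (x i'') := (hx2 i₀ h0).symm
      have e2 : x j = φ i'' j (h.trans h0) (x i'') := (hx2 j (h.trans h0)).symm
      rw [e1, e2, φ_comp i'' i₀ j h0 h (x i'')]
    exact ⟨i'', hsub i hi, hsub i' hi'⟩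
  constructor
  · exact ⟨w, (hle w w).2 ⟨0, add_zero w⟩⟩
  apply Topology.IsInducing.subtypeVal.isPreconnected_image.mp
  suffices hh : IsPreconnected (⋂ i, Sf i) by
    convert hh using 1
    ext x
    constructor
    · rintro ⟨v, hv, rfl⟩
      refine Set.mem_iInter.2 fun i => ⟨fun j k h0 => hlec0 v w ((hle v w).1 hv) j k h0,
        Set.mem_iInter.2 fun j => Set.mem_iInter.2 fun h => v.2 i j h⟩
    · intro hx
      have hx' := fun i => Set.mem_iInter.1 hx i
      have hcompat : ∀ i j (h : j ≤ i), φ i j h (x i) = x j := by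
        intro i j h
        have h2 := (hx' i).2
        simp only [Set.mem_iInter, Set.mem_setOf_eq] at h2
        exact h2 j h
      refine ⟨⟨x, hcompat⟩, ?_, rfl⟩
      exact (hle ⟨x, hcompat⟩ w).2
        ⟨w, hcoord_le w ⟨x, hcompat⟩ hw' (fun i k h0 => (hx' i).1 i k h0)⟩
  -- directed intersection of compact connected sets is preconnected
  intro U V hU hV hcov hne1 hne2
  by_contra hemp
  rw [Set.not_nonempty_iff_eq_empty] at hemp
  haveI := hι
  obtain ⟨i₀⟩ := hι
  set K := ⋂ i, Sf i with hK
  have hKclosed : IsClosed K := isClosed_iInter hSfclosed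
  have hKcpt : IsCompact K := (hSfcpt i₀).of_isClosed_subset hKclosed (Set.iInter_subset _ i₀)
  have hKU : K ∩ U = K ∩ Vᶜ := by
    ext x
    constructor
    · rintro ⟨hxK, hxU⟩
      refine ⟨hxK, fun hxV => ?_⟩
      have hmem : x ∈ K ∩ (U ∩ V) := ⟨hxK, hxU, hxV⟩
      rw [hemp] at hmem
      exact hmem
    · rintro ⟨hxK, hxV⟩
      exact ⟨hxK, (hcov hxK).resolve_right hxV⟩
  have hKV : K ∩ V = K ∩ Uᶜ := by
    ext x
    constructor
    · rintro ⟨hxK, hxV⟩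
      refine ⟨hxK, fun hxU => ?_⟩
      have hmem : x ∈ K ∩ (U ∩ V) := ⟨hxK, hxU, hxV⟩
      rw [hemp] at hmem
      exact hmem
    · rintro ⟨hxK, hxU⟩
      exact ⟨hxK, (hcov hxK).resolve_left hxU⟩
  have hcptU : IsCompact (K ∩ U) := by
    rw [hKU]
    exact hKcpt.inter_right hV.isClosed_compl
  have hcptV : IsCompact (K ∩ V) := by
    rw [hKV]
    exact hKcpt.inter_right hU.isClosed_compl
  have hdisj : Disjoint (K ∩ U) (K ∩ V) := by
    rw [Set.disjoint_iff_inter_eq_empty]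
    apply Set.eq_empty_iff_forall_notMem.2
    rintro x ⟨⟨h1, h2⟩, ⟨-, h4⟩⟩
    have hmem : x ∈ K ∩ (U ∩ V) := ⟨h1, h2, h4⟩
    rw [hemp] at hmem
    exact hmem
  obtain ⟨U', V', hU'o, hV'o, hsU, hsV, hUV'⟩ := SeparatedNhds.of_isCompact_isCompact hcptU hcptV hdisj
  have hKsub : K ⊆ U' ∪ V' := by
    intro x hx
    rcases hcov hx with h | h
    · exact Or.inl (hsU ⟨hx, h⟩)
    · exact Or.inr (hsV ⟨hx, h⟩)
  have hex : ∃ i, Sf i ⊆ U' ∪ V' := by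
    by_contra hcon
    push_neg at hcon
    have hne : ∀ i, (Sf i ∩ (U' ∪ V')ᶜ).Nonempty := by
      intro i
      obtain ⟨x, hx1, hx2⟩ := Set.not_subset.1 (hcon i)
      exact ⟨x, hx1, hx2⟩
    have hdir : Directed (· ⊇ ·) (fun i => Sf i ∩ (U' ∪ V')ᶜ) := by
      intro i i'
      obtain ⟨i'', h1, h2⟩ := hdirSf i i'
      exact ⟨i'', Set.inter_subset_inter_left _ h1, Set.inter_subset_inter_left _ h2⟩
    obtain ⟨x, hx⟩ := IsCompact.nonempty_iInter_of_directed_nonempty_isCompact_isClosed _ hdir hne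
      (fun i => (hSfcpt i).inter_right (hU'o.union hV'o).isClosed_compl)
      (fun i => (hSfclosed i).inter (hU'o.union hV'o).isClosed_compl)
    simp only [Set.mem_iInter, Set.mem_inter_iff] at hx
    exact (hx i₀).2 (hKsub (Set.mem_iInter.2 fun i => (hx i).1))
  obtain ⟨i₁, hsub⟩ := hex
  have h1 : (Sf i₁ ∩ U').Nonempty := by
    obtain ⟨x, hxK, hxU⟩ := hne1
    exact ⟨x, Set.mem_iInter.1 hxK i₁, hsU ⟨hxK, hxU⟩⟩
  have h2 : (Sf i₁ ∩ V').Nonempty := by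
    obtain ⟨x, hxK, hxV⟩ := hne2
    exact ⟨x, Set.mem_iInter.1 hxK i₁, hsV ⟨hxK, hxV⟩⟩
  obtain ⟨x, hx⟩ := hSfconn i₁ U' V' hU'o hV'o hsub h1 h2
  exact Set.disjoint_iff.1 hUV' ⟨hx.2.1, hx.2.2⟩

end AuxStmt6

/-- A projective limit of cones of the form `[0,∞]^n` (with continuous
linear bonding maps over an upward directed index set), realized as the compatible families
in the product with coordinatewise operations and the induced product topology, is strongly
connected and has an abundance of compact idempotents (with respect to any extended Choquet
cone structure on it with coordinatewise operations and the induced topology). -/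
theorem stmt_6 {ι : Type*} [Preorder ι] [IsDirected ι (· ≤ ·)] (n : ι → ℕ)
    (φ : ∀ i j, j ≤ i → (Fin (n i) → ℝ≥0∞) → (Fin (n j) → ℝ≥0∞))
    (φ_cont : ∀ i j (h : j ≤ i), Continuous (φ i j h))
    (φ_add : ∀ i j (h : j ≤ i) (x y : Fin (n i) → ℝ≥0∞),
      φ i j h (x + y) = φ i j h x + φ i j h y)
    (φ_zero : ∀ i j (h : j ≤ i), φ i j h 0 = 0)
    (φ_smul : ∀ i j (h : j ≤ i) (t : PosReal) (x : Fin (n i) → ℝ≥0∞),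
      φ i j h (fun k => ENNReal.ofReal t.1 * x k) = fun k => ENNReal.ofReal t.1 * φ i j h x k)
    (φ_id : ∀ i (h : i ≤ i) (x : Fin (n i) → ℝ≥0∞), φ i i h x = x)
    (φ_comp : ∀ i j k (hij : j ≤ i) (hjk : k ≤ j) (x : Fin (n i) → ℝ≥0∞),
      φ j k hjk (φ i j hij x) = φ i k (hjk.trans hij) x)
    (inst : ECCone {x : ∀ i, Fin (n i) → ℝ≥0∞ // ∀ i j (h : j ≤ i), φ i j h (x i) = x j})
    (h_top : inst.toTopologicalSpace = instTopologicalSpaceSubtype)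
    (h_zero : (ECCone.zeroOf inst).1 = fun _ _ => 0)
    (h_add : ∀ x y : {x : ∀ i, Fin (n i) → ℝ≥0∞ // ∀ i j (h : j ≤ i), φ i j h (x i) = x j},
      (ECCone.addOf inst x y).1 = fun i k => x.1 i k + y.1 i k)
    (h_smul : ∀ (t : PosReal)
      (x : {x : ∀ i, Fin (n i) → ℝ≥0∞ // ∀ i j (h : j ≤ i), φ i j h (x i) = x j}),
      (ECCone.psmul (self := inst) t x).1 = fun i k => ENNReal.ofReal t.1 * x.1 i k) :
    (@ECCone.StronglyConnected _ inst) ∧ (@ECCone.HasAbundantCompactIdem _ inst) := by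
  exact ⟨aux_conn φ_cont φ_add φ_id φ_comp inst h_top h_zero h_add,
    aux_abundant inst h_zero h_add⟩
end

section
/- Let C be an extended Choquet cone with an abundance of compact idempotents and let f ∈ Lsc(C). Then sup_{n∈ℕ} n·f = χ_{supp(f)}, i.e. for every x ∈ C, sup_n n·f(x) equals 0 if x ≤ supp(f) and equals ∞ otherwise. -/
open scoped ENNReal NNReal

/-- For `f ∈ Lsc(C)` on an extended Choquet cone with an abundance of
compact idempotents, `sup_n n·f = χ_{supp f}`. -/
theorem stmt_8 {C : Type*} [ECCone C] (habund : ECCone.HasAbundantCompactIdem C)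
    (f : C → ℝ≥0∞) (hf : ECCone.MemLsc f) (w : C) (hw : ECCone.IsSupp f w) :
    ∀ x : C, (x ≤ w → (⨆ n : ℕ, (n : ℝ≥0∞) * f x) = 0) ∧
      (¬ x ≤ w → (⨆ n : ℕ, (n : ℝ≥0∞) * f x) = ⊤) := by
  classical
  haveI : CompactSpace C := ECCone.compact
  haveI : T2Space C := ECCone.t2
  obtain ⟨⟨hf0, hfadd, _⟩, hlsc⟩ := hf
  set Z : Set C := {x : C | f x = 0} with hZ
  have h0Z : (0 : C) ∈ Z := hf0
  have hZadd : ∀ {a b : C}, a ∈ Z → b ∈ Z → a + b ∈ Z := by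
    intro a b ha hb
    simp only [hZ, Set.mem_setOf_eq] at *
    rw [hfadd, ha, hb, add_zero]
  have hmono : ∀ {a b : C}, a ≤ b → f a ≤ f b := by
    intro a b hab
    obtain ⟨z, hz⟩ := (ECCone.le_iff_exists_add a b).mp hab
    rw [← hz, hfadd]; exact le_self_add
  -- the filter of tails of the directed set Z
  have hZne : Z.Nonempty := ⟨0, h0Z⟩
  haveI : Nonempty Z := hZne.to_subtype
  let T : Z → Set C := fun z => {y | y ∈ Z ∧ z.1 ≤ y}
  let F : Filter C := ⨅ z : Z, Filter.principal (T z)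
  have hTmem : ∀ z : Z, T z ∈ F := fun z =>
    Filter.mem_iInf_of_mem z (Filter.mem_principal_self _)
  have hdir : Directed (· ≥ ·) (fun z : Z => Filter.principal (T z)) := by
    intro a b
    refine ⟨⟨a.1 + b.1, hZadd a.2 b.2⟩, ?_, ?_⟩ <;>
    · simp only [ge_iff_le, Filter.le_principal_iff, Filter.mem_principal]
      intro y hy
      refine ⟨hy.1, ?_⟩
      · first
        | exact le_trans ((ECCone.le_iff_exists_add a.1 _).mpr ⟨b.1, rfl⟩) hy.2
        | exact le_trans ((ECCone.le_iff_exists_add b.1 _).mpr ⟨a.1, by rw [add_comm]⟩) hy.2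
  haveI hFne : F.NeBot := by
    refine Filter.iInf_neBot_of_directed hdir ?_
    intro z
    exact Filter.principal_neBot_iff.mpr ⟨z.1, z.2, le_refl _⟩
  obtain ⟨p, hp⟩ := exists_clusterPt_of_compactSpace F
  -- f p = 0
  have hfp : f p = 0 := by
    by_contra hne
    have hpos : (0 : ℝ≥0∞) < f p := pos_iff_ne_zero.mpr hne
    have hU : {x : C | 0 < f x} ∈ nhds p := hlsc p 0 hpos
    have hT0 : T ⟨0, h0Z⟩ ∈ F := hTmem _
    have hinter : ({x : C | 0 < f x} ∩ T ⟨0, h0Z⟩).Nonempty :=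
      hp.neBot.nonempty_of_mem
        (Filter.inter_mem (Filter.mem_inf_of_left hU) (Filter.mem_inf_of_right hT0))
    obtain ⟨y, hy1, hy2, _⟩ := hinter
    exact absurd hy2 (by simp only [Set.mem_setOf_eq] at hy1 ⊢; intro h; rw [h] at hy1; exact lt_irrefl 0 hy1)
  -- p is an upper bound of Z
  have hub : ∀ z ∈ Z, z ≤ p := by
    intro z hzZ
    have hclosed : IsClosed ((fun y => z + y) '' Set.univ) := by
      have hcont : Continuous (fun y : C => z + y) :=
        ECCone.continuous_add'.comp (Continuous.prodMk_right z)
      exact (isCompact_univ.image hcont).isClosed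
    have hsub : T ⟨z, hzZ⟩ ⊆ (fun y => z + y) '' Set.univ := by
      intro y hy
      obtain ⟨c, hc⟩ := (ECCone.le_iff_exists_add z y).mp hy.2
      exact ⟨c, Set.mem_univ _, hc⟩
    have hpcl : p ∈ closure (T ⟨z, hzZ⟩) := by
      rw [mem_closure_iff_clusterPt]
      exact hp.mono (Filter.le_principal_iff.mpr (hTmem _))
    have := hclosed.closure_subset (closure_mono hsub hpcl)
    obtain ⟨c, _, hc⟩ := this
    exact (ECCone.le_iff_exists_add z p).mpr ⟨c, hc⟩
  -- hence p = w and f w = 0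
  have hpw : p = w := le_antisymm (hw.1 hfp) (hw.2 hub)
  have hfw : f w = 0 := hpw ▸ hfp
  intro x
  constructor
  · intro hxw
    have : f x = 0 := le_antisymm (hfw ▸ hmono hxw) zero_le
    simp [this]
  · intro hxw
    have hfx : f x ≠ 0 := fun h => hxw (hw.1 h)
    rw [← ENNReal.iSup_mul, ENNReal.iSup_natCast, ENNReal.top_mul hfx]
end

section
/- Let C be an extended Choquet cone with an abundance of compact idempotents. If f ∈ A(C), then supp(f) is a compact idempotent of C. -/
open scoped ENNReal NNReal

section Aux

open Filter Topology

/-- In a compact space, a set directed under a reflexive transitive relation has a point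
lying in the closure of every "tail". -/
lemma exists_clusterPoint_of_directedOn {C : Type*} [TopologicalSpace C] [CompactSpace C]
    {r : C → C → Prop} (hr : Transitive r) (hrefl : ∀ v, r v v)
    {D : Set C} (hne : D.Nonempty) (hdir : DirectedOn r D) :
    ∃ p : C, ∀ v ∈ D, p ∈ closure {u | u ∈ D ∧ r v u} := by
  haveI : Nonempty D := hne.to_subtype
  haveI : Nonempty C := ⟨hne.some⟩
  set T : D → Set C := fun v => {u | u ∈ D ∧ r v u} with hT
  have hTne : ∀ v : D, (T v).Nonempty := fun v => ⟨v, v.2, hrefl v⟩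
  set F : Filter C := ⨅ v : D, 𝓟 (T v) with hF
  have hdirF : Directed (· ≥ ·) fun v : D => 𝓟 (T v) := by
    intro v₁ v₂
    obtain ⟨z, hzD, h1, h2⟩ := hdir v₁ v₁.2 v₂ v₂.2
    refine ⟨⟨z, hzD⟩, ?_, ?_⟩ <;>
      · simp only [le_principal_iff, mem_principal]
        intro u hu
        exact ⟨hu.1, hr (by assumption) hu.2⟩
  haveI hFne : F.NeBot := iInf_neBot_of_directed hdirF fun v => principal_neBot_iff.2 (hTne v)
  obtain ⟨p, -, hp⟩ := isCompact_univ (le_principal_iff.2 (Filter.univ_mem (f := F)))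
  refine ⟨p, fun v hv => ?_⟩
  have hmem : F ≤ 𝓟 (T ⟨v, hv⟩) := iInf_le _ _
  exact mem_closure_iff_clusterPt.2 (hp.mono hmem)

variable {C : Type*} [ECCone C]

lemma eccone_le_add (x z : C) : x ≤ x + z :=
  (ECCone.le_iff_exists_add x (x + z)).2 ⟨z, rfl⟩

lemma eccone_monotone {f : C → ℝ≥0∞} (hf : ECCone.IsLinFun f) : Monotone f := by
  intro x y hxy
  obtain ⟨z, hz⟩ := (ECCone.le_iff_exists_add x y).1 hxy
  rw [← hz, hf.2.1 x z]
  exact le_self_add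

lemma eccone_isClosed_le_right (x : C) : IsClosed {u : C | x ≤ u} := by
  haveI : CompactSpace C := ECCone.compact
  haveI : T2Space C := ECCone.t2
  have : {u : C | x ≤ u} = (fun z : C => x + z) '' Set.univ := by
    ext u
    simp only [Set.mem_setOf_eq, Set.image_univ, Set.mem_range]
    constructor
    · intro h; obtain ⟨z, hz⟩ := (ECCone.le_iff_exists_add x u).1 h; exact ⟨z, hz⟩
    · rintro ⟨z, rfl⟩; exact eccone_le_add x z
  rw [this]
  have hc : Continuous fun z : C => x + z :=
    ECCone.continuous_add'.comp (continuous_const.prodMk continuous_id)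
  exact (isCompact_univ.image hc).isClosed

lemma eccone_isClosed_le_left (v : C) : IsClosed {u : C | u ≤ v} := by
  haveI : CompactSpace C := ECCone.compact
  haveI : T2Space C := ECCone.t2
  have : {u : C | u ≤ v} = Prod.fst '' ((fun p : C × C => p.1 + p.2) ⁻¹' {v}) := by
    ext u
    simp only [Set.mem_setOf_eq, Set.mem_image, Set.mem_preimage, Set.mem_singleton_iff,
      Prod.exists]
    constructor
    · intro h
      obtain ⟨z, hz⟩ := (ECCone.le_iff_exists_add u v).1 h
      exact ⟨u, z, hz, rfl⟩
    · rintro ⟨a, b, hab, rfl⟩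
      exact (ECCone.le_iff_exists_add a v).2 ⟨b, hab⟩
  rw [this]
  have hcpt : IsCompact ((fun p : C × C => p.1 + p.2) ⁻¹' {v}) :=
    (isClosed_singleton.preimage ECCone.continuous_add').isCompact
  exact (hcpt.image continuous_fst).isClosed

end Aux

/-- On an extended Choquet cone with an abundance of compact idempotents,
the support of a function in `A(C)` is a compact idempotent. -/
theorem stmt_9 {C : Type*} [ECCone C] (habund : ECCone.HasAbundantCompactIdem C)
    (f : C → ℝ≥0∞) (hf : ECCone.MemA f) (w : C) (hw : ECCone.IsSupp f w) :
    ECCone.IsCompactIdem w := by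
  haveI : CompactSpace C := ECCone.compact
  haveI : T2Space C := ECCone.t2
  obtain ⟨hlin, hcont⟩ := hf
  set Z : Set C := {x : C | f x = 0} with hZ
  -- Z is downward closed and closed under addition, hence directed upward
  have hZ0 : (0 : C) ∈ Z := hlin.1
  have hZadd : ∀ x ∈ Z, ∀ y ∈ Z, x + y ∈ Z := by
    intro x hx y hy
    simp only [hZ, Set.mem_setOf_eq] at *
    rw [hlin.2.1 x y, hx, hy, add_zero]
  have hZdir : DirectedOn (· ≤ ·) Z := by
    intro x hx y hy
    exact ⟨x + y, hZadd x hx y hy, eccone_le_add x y, by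
      rw [add_comm]; exact eccone_le_add y x⟩
  -- w is the maximum of Z
  have hwZ : w ∈ Z := by
    obtain ⟨p, hp⟩ := exists_clusterPoint_of_directedOn
      (r := (· ≤ ·)) (fun a b c => le_trans) le_refl ⟨0, hZ0⟩ hZdir
    have hZclosed : IsClosed Z := isClosed_singleton.preimage hcont
    have hpZ : p ∈ Z := by
      have := hp 0 hZ0
      have hsub : {u | u ∈ Z ∧ 0 ≤ u} ⊆ Z := fun u hu => hu.1
      exact hZclosed.closure_subset ((closure_mono hsub) this)
    have hpub : ∀ x ∈ Z, x ≤ p := by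
      intro x hx
      have := hp x hx
      have hsub : {u | u ∈ Z ∧ x ≤ u} ⊆ {u : C | x ≤ u} := fun u hu => hu.2
      exact (eccone_isClosed_le_right x).closure_subset ((closure_mono hsub) this)
    have hpw : p = w := le_antisymm (hw.1 hpZ) (hw.2 hpub)
    rwa [hpw] at hpZ
  have hfw : f w = 0 := hwZ
  have hidem : ECCone.IsIdem w := by
    have h1 : w ≤ w + w := eccone_le_add w w
    have h2 : w + w ≤ w := hw.1 (hZadd w hwZ w hwZ)
    exact le_antisymm h2 h1
  refine ⟨hidem, ?_⟩
  -- way-below: for downward directed D of idempotents with inf ≤ w, some v ∈ D has v ≤ w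
  intro D hDne hDidem hDdir m hm hmw
  by_contra hcon
  push_neg at hcon
  -- every v in D has f v = ∞
  have hvinf : ∀ v ∈ D, f v = ⊤ := by
    intro v hv
    have hvid : f v + f v = f v := by
      rw [← hlin.2.1 v v, hDidem v hv]
    rcases eq_or_ne (f v) ⊤ with h | h
    · exact h
    · exfalso
      have hv0 : f v = 0 := by
        have := hvid
        rcases eq_or_ne (f v) 0 with h0 | h0
        · exact h0
        · exfalso
          have : f v < f v + f v := ENNReal.lt_add_right h h0
          rw [hvid] at this
          exact lt_irrefl _ this
      exact hcon v hv (hw.1 hv0)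
  -- get a cluster point p of D; p = m, and f p = ∞ by continuity, contradicting f m = 0
  obtain ⟨p, hp⟩ := exists_clusterPoint_of_directedOn
    (r := (· ≥ ·)) (fun a b c hab hbc => le_trans hbc hab) le_refl hDne hDdir
  -- p is a lower bound of D
  have hplb : ∀ v ∈ D, p ≤ v := by
    intro v hv
    have := hp v hv
    have hsub : {u | u ∈ D ∧ v ≥ u} ⊆ {u : C | u ≤ v} := fun u hu => hu.2
    exact (eccone_isClosed_le_left v).closure_subset ((closure_mono hsub) this)
  -- p ≥ m
  have hmp : m ≤ p := by
    obtain ⟨v₀, hv₀⟩ := hDne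
    have := hp v₀ hv₀
    have hsub : {u | u ∈ D ∧ v₀ ≥ u} ⊆ {u : C | m ≤ u} := fun u hu => hm.1 hu.1
    exact (eccone_isClosed_le_right m).closure_subset ((closure_mono hsub) this)
  have hpm : p = m := le_antisymm (hm.2 hplb) hmp
  -- f p = ∞ since p in closure of f⁻¹(∞)
  have hfp : f p = ⊤ := by
    obtain ⟨v₀, hv₀⟩ := hDne
    have := hp v₀ hv₀
    have hsub : {u | u ∈ D ∧ v₀ ≥ u} ⊆ {u : C | f u = ⊤} := fun u hu => hvinf u hu.1
    have hclosed : IsClosed {u : C | f u = ⊤} := isClosed_singleton.preimage hcont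
    exact hclosed.closure_subset ((closure_mono hsub) this)
  have hfm : f m = 0 := le_antisymm (hfw ▸ eccone_monotone hlin hmw) zero_le
  rw [hpm, hfm] at hfp
  exact ENNReal.top_ne_zero hfp.symm
end
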